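/- arXiv:1106.1524 — 16 statements merged into one kernel-verified Lean document; each statement's English description precedes it below -/
import Mathlib

section
/- Let (Ω, R, P) satisfy (NAP0)–(NAP3). Assume Ω is uncountable. Then R is non-Archimedean; more precisely, there exists ω ∈ Ω such that the element ε = P({ω}) of R satisfies 0 < ε and n·ε ≤ 1 for every natural number n. -/
/-- For a NAP probability on an uncountable sample space, some singleton
has positive probability ε with n·ε ≤ 1 for all n, so the field is non-Archimedean. -/
theorem nap_uncountable_nonArchimedean
    {Ω R : Type*} [Uncountable Ω] [Field R] [LinearOrder R] [IsStrictOrderedRing R] (ι : ℝ →+* R)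
    (P : Set Ω → R)
    (nap1 : ∀ A : Set Ω, 0 ≤ P A)
    (nap2 : ∀ A : Set Ω, P A = 1 ↔ A = Set.univ)
    (nap3 : ∀ A B : Set Ω, A ∩ B = ∅ → P (A ∪ B) = P A + P B) :
    ∃ ω : Ω, 0 < P {ω} ∧ ∀ n : ℕ, (n : R) * P {ω} ≤ 1 := by
  have hPuniv : P Set.univ = 1 := (nap2 Set.univ).mpr rfl
  -- P A ≤ 1 for all A
  have hle1 : ∀ A : Set Ω, P A ≤ 1 := by
    intro A
    have h := nap3 A Aᶜ (by simp [Set.inter_compl_self])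
    rw [Set.union_compl_self, hPuniv] at h
    nlinarith [nap1 Aᶜ]
  -- finite additivity
  have hsum : ∀ s : Finset Ω, P ↑s = ∑ ω ∈ s, P {ω} := by
    intro s
    classical
    induction s using Finset.induction_on with
    | empty =>
      have h := nap3 ∅ ∅ (by simp)
      simp only [Set.union_self] at h
      simp [show P (∅ : Set Ω) = 0 by linarith]
    | @insert a s ha ih =>
      have h := nap3 {a} ↑s (by simp [Set.eq_empty_iff_forall_notMem, ha])
      rw [Finset.coe_insert, Set.insert_eq, h, ih, Finset.sum_insert ha]
  -- the sets S n are finite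
  set S : ℕ → Set Ω := fun n => {ω | 1 < (n : R) * P {ω}} with hS
  have hfin : ∀ n, (S n).Finite := by
    intro n
    by_contra hinf
    have hinf : (S n).Infinite := hinf
    obtain ⟨t, hts, htc⟩ := hinf.exists_subset_card_eq n
    have hn : 0 < n := by
      rcases Nat.eq_zero_or_pos n with h0 | h0
      · exfalso
        obtain ⟨t1, hts1, htc1⟩ := hinf.exists_subset_card_eq 1
        obtain ⟨ω, hω⟩ := Finset.card_eq_one.mp htc1
        have := hts1 (by simp [hω] : ω ∈ t1)
        simp only [hS, Set.mem_setOf_eq, h0] at this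
        push_cast at this
        linarith
      · exact h0
    have htne : t.Nonempty := Finset.card_pos.mp (htc ▸ hn)
    have hlt : ∑ ω ∈ t, (1 : R) < ∑ ω ∈ t, (n : R) * P {ω} := by
      apply Finset.sum_lt_sum_of_nonempty htne
      intro ω hω
      exact hts hω
    rw [Finset.sum_const, ← Finset.mul_sum, htc, nsmul_eq_mul, mul_one, ← hsum] at hlt
    have h1 := hle1 (↑t : Set Ω)
    have hn' : (0 : R) < (n : R) := by exact_mod_cast hn
    nlinarith
  -- countable union
  have hcnt : (⋃ n, S n).Countable := Set.countable_iUnion fun n => (hfin n).countable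
  have hne : ¬ ∀ ω : Ω, ω ∈ ⋃ n, S n := by
    intro h
    have huc : (Set.univ : Set Ω).Countable := hcnt.mono fun x _ => h x
    exact (not_countable (α := Ω)) (Set.countable_univ_iff.mp huc)
  push_neg at hne
  obtain ⟨ω, hω⟩ := hne
  refine ⟨ω, ?_, ?_⟩
  · by_contra h
    push_neg at h
    have h0 : P {ω} = 0 := le_antisymm h (nap1 _)
    have h := nap3 {ω} {ω}ᶜ (by simp [Set.inter_compl_self])
    rw [Set.union_compl_self, hPuniv, h0, zero_add] at h
    have := (nap2 _).mp h.symm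
    have : ω ∈ ({ω}ᶜ : Set Ω) := this ▸ Set.mem_univ ω
    simp at this
  · intro n
    have : ω ∉ S n := fun h => hω (Set.mem_iUnion.mpr ⟨n, h⟩)
    simpa [hS, not_lt] using this
end

section
/- Let Ω be a set, 𝔄 a σ-algebra of subsets of Ω, and P : 𝔄 → ℝ satisfy (K1) P(A) ≥ 0 for all A ∈ 𝔄, (K2) P(Ω) = 1, and (K3) P(A ∪ B) = P(A) + P(B) for disjoint A, B ∈ 𝔄. Then the Continuity Axiom (K4) holds if and only if the Conditional Probability Principle (CPP) holds, where: (K4) for every increasing sequence (Aₙ) in 𝔄 with union A, P(A) = supₙ P(Aₙ); and (CPP) for every increasing sequence (Ωₙ) in 𝔄 with ⋃ₙ Ωₙ = Ω, there is N such that P(Ωₙ) > 0 for all n ≥ N, and for every A ∈ 𝔄 the sequence P(A ∩ Ωₙ)/P(Ωₙ) converges to P(A) as n → ∞. -/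
open Filter Topology

/-- For a finitely additive probability on a σ-algebra, the Continuity
Axiom (K4) holds iff the Conditional Probability Principle (CPP) holds. -/
theorem continuity_iff_CPP
    {Ω : Type*} (𝔄 : Set (Set Ω)) (P : Set Ω → ℝ)
    (huniv : Set.univ ∈ 𝔄)
    (hcompl : ∀ A ∈ 𝔄, Aᶜ ∈ 𝔄)
    (hiUnion : ∀ f : ℕ → Set Ω, (∀ n, f n ∈ 𝔄) → (⋃ n, f n) ∈ 𝔄)
    (K1 : ∀ A ∈ 𝔄, 0 ≤ P A)
    (K2 : P Set.univ = 1)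
    (K3 : ∀ A ∈ 𝔄, ∀ B ∈ 𝔄, A ∩ B = ∅ → P (A ∪ B) = P A + P B) :
    (∀ A : ℕ → Set Ω, (∀ n, A n ∈ 𝔄) → (∀ n, A n ⊆ A (n + 1)) →
        P (⋃ n, A n) = ⨆ n, P (A n))
    ↔
    (∀ Ωn : ℕ → Set Ω, (∀ n, Ωn n ∈ 𝔄) → (∀ n, Ωn n ⊆ Ωn (n + 1)) →
        (⋃ n, Ωn n) = Set.univ →
        (∃ N : ℕ, ∀ n ≥ N, 0 < P (Ωn n)) ∧
        ∀ A ∈ 𝔄, Filter.Tendsto (fun n => P (A ∩ Ωn n) / P (Ωn n))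
          Filter.atTop (nhds (P A))) := by
  -- closure under binary union
  have hunion : ∀ A ∈ 𝔄, ∀ B ∈ 𝔄, A ∪ B ∈ 𝔄 := by
    intro A hA B hB
    have h := hiUnion (fun n => if n = 0 then A else B)
      (by intro n; split <;> assumption)
    have he : (⋃ n, if n = 0 then A else B) = A ∪ B := by
      ext x
      simp only [Set.mem_iUnion, Set.mem_union]
      constructor
      · rintro ⟨n, hn⟩
        by_cases h0 : n = 0
        · left; simpa [h0] using hn
        · right; simpa [h0] using hn
      · rintro (h | h)
        · exact ⟨0, by simpa using h⟩
        · exact ⟨1, by simpa using h⟩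
    rwa [he] at h
  -- closure under binary intersection
  have hinter : ∀ A ∈ 𝔄, ∀ B ∈ 𝔄, A ∩ B ∈ 𝔄 := by
    intro A hA B hB
    have he : A ∩ B = (Aᶜ ∪ Bᶜ)ᶜ := by
      rw [Set.compl_union, compl_compl, compl_compl]
    rw [he]
    exact hcompl _ (hunion _ (hcompl _ hA) _ (hcompl _ hB))
  -- monotonicity of P
  have Pmono : ∀ A ∈ 𝔄, ∀ B ∈ 𝔄, A ⊆ B → P A ≤ P B := by
    intro A hA B hB hAB
    have hd : B ∩ Aᶜ ∈ 𝔄 := hinter _ hB _ (hcompl _ hA)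
    have hdisj : A ∩ (B ∩ Aᶜ) = ∅ := by
      ext x; simp; tauto
    have hcup : A ∪ (B ∩ Aᶜ) = B := by
      ext x
      simp only [Set.mem_union, Set.mem_inter_iff, Set.mem_compl_iff]
      constructor
      · rintro (h | ⟨h, _⟩)
        · exact hAB h
        · exact h
      · intro h
        by_cases hx : x ∈ A
        · exact Or.inl hx
        · exact Or.inr ⟨h, hx⟩
    have := K3 A hA (B ∩ Aᶜ) hd hdisj
    rw [hcup] at this
    have := K1 _ hd
    linarith
  have Ple1 : ∀ A ∈ 𝔄, P A ≤ 1 := by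
    intro A hA
    rw [← K2]
    exact Pmono _ hA _ huniv (Set.subset_univ A)
  constructor
  · -- K4 → CPP
    intro K4 Ωn hΩ hmono hU
    have hΩmono : Monotone Ωn := monotone_nat_of_le_succ hmono
    have hPmono : Monotone (fun n => P (Ωn n)) :=
      monotone_nat_of_le_succ (fun n => Pmono _ (hΩ n) _ (hΩ (n + 1)) (hmono n))
    have hbdd : BddAbove (Set.range fun n => P (Ωn n)) := by
      refine ⟨1, ?_⟩
      rintro x ⟨n, rfl⟩
      exact Ple1 _ (hΩ n)
    have hsup : (⨆ n, P (Ωn n)) = 1 := by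
      rw [← K4 Ωn hΩ hmono, hU, K2]
    have htend1 : Tendsto (fun n => P (Ωn n)) atTop (𝓝 1) := by
      rw [← hsup]
      exact tendsto_atTop_ciSup hPmono hbdd
    constructor
    · have hev : ∀ᶠ n in atTop, 0 < P (Ωn n) :=
        htend1.eventually (eventually_gt_nhds one_pos)
      exact eventually_atTop.1 hev
    · intro A hA
      have hAΩ : ∀ n, A ∩ Ωn n ∈ 𝔄 := fun n => hinter _ hA _ (hΩ n)
      have hAmono : ∀ n, A ∩ Ωn n ⊆ A ∩ Ωn (n + 1) :=
        fun n => Set.inter_subset_inter_right _ (hmono n)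
      have hUA : (⋃ n, A ∩ Ωn n) = A := by
        rw [← Set.inter_iUnion, hU, Set.inter_univ]
      have hPAmono : Monotone (fun n => P (A ∩ Ωn n)) :=
        monotone_nat_of_le_succ (fun n => Pmono _ (hAΩ n) _ (hAΩ (n + 1)) (hAmono n))
      have hbddA : BddAbove (Set.range fun n => P (A ∩ Ωn n)) := by
        refine ⟨1, ?_⟩
        rintro x ⟨n, rfl⟩
        exact Ple1 _ (hAΩ n)
      have hsupA : (⨆ n, P (A ∩ Ωn n)) = P A := by
        rw [← K4 _ hAΩ hAmono, hUA]
      have htendA : Tendsto (fun n => P (A ∩ Ωn n)) atTop (𝓝 (P A)) := by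
        rw [← hsupA]
        exact tendsto_atTop_ciSup hPAmono hbddA
      have := htendA.div htend1 one_ne_zero
      rw [div_one] at this
      exact this
  · -- CPP → K4
    intro CPP A hAmem hAmono
    set U := ⋃ n, A n with hUdef
    have hAsubU : ∀ n, A n ⊆ U := fun n => Set.subset_iUnion A n
    have hU : U ∈ 𝔄 := hiUnion _ hAmem
    have hUc : Uᶜ ∈ 𝔄 := hcompl _ hU
    set Ωn : ℕ → Set Ω := fun n => A n ∪ Uᶜ with hΩdef
    have hΩmem : ∀ n, Ωn n ∈ 𝔄 := fun n => hunion _ (hAmem n) _ hUc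
    have hΩmono' : ∀ n, Ωn n ⊆ Ωn (n + 1) :=
      fun n => Set.union_subset_union_left _ (hAmono n)
    have hΩmono : Monotone Ωn := monotone_nat_of_le_succ hΩmono'
    have hΩU : (⋃ n, Ωn n) = Set.univ := by
      have : (⋃ n, Ωn n) = U ∪ Uᶜ := by
        simp only [hΩdef, Set.iUnion_union_distrib, Set.iUnion_const, hUdef]
      rw [this, Set.union_compl_self]
    obtain ⟨⟨N, hN⟩, htd⟩ := CPP Ωn hΩmem hΩmono' hΩU
    have hq : 0 < P (Ωn N) := hN N le_rfl
    have h1 := htd (Ωn N) (hΩmem N)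
    have key : Tendsto (fun n => P (Ωn N) / P (Ωn n)) atTop (𝓝 (P (Ωn N))) := by
      refine h1.congr' ?_
      filter_upwards [eventually_ge_atTop N] with n hn
      rw [Set.inter_eq_left.2 (hΩmono hn)]
    have hP1 : Tendsto (fun n => P (Ωn n)) atTop (𝓝 1) := by
      have h2 : Tendsto (fun n => P (Ωn N) / (P (Ωn N) / P (Ωn n))) atTop
          (𝓝 (P (Ωn N) / P (Ωn N))) := tendsto_const_nhds.div key hq.ne'
      rw [div_self hq.ne'] at h2
      refine h2.congr ?_
      intro n
      rw [div_div_eq_mul_div, mul_comm, mul_div_assoc, div_self hq.ne', mul_one]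
    have hadd : ∀ n, P (Ωn n) = P (A n) + P Uᶜ := by
      intro n
      refine K3 _ (hAmem n) _ hUc ?_
      ext x
      simp only [Set.mem_inter_iff, Set.mem_compl_iff, Set.mem_empty_iff_false, iff_false,
        not_and, not_not]
      exact fun hx => hAsubU n hx
    have h1c : P U + P Uᶜ = 1 := by
      rw [← K3 U hU Uᶜ hUc (by simp), Set.union_compl_self, K2]
    have hPA : Tendsto (fun n => P (A n)) atTop (𝓝 (P U)) := by
      have h3 := hP1.sub (tendsto_const_nhds (x := P Uᶜ) (f := atTop))
      have he : (fun n => P (Ωn n) - P Uᶜ) = fun n => P (A n) := by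
        funext n; rw [hadd n]; ring
      rw [he] at h3
      have : (1 : ℝ) - P Uᶜ = P U := by linarith
      rwa [this] at h3
    have hmonoP : Monotone (fun n => P (A n)) :=
      monotone_nat_of_le_succ (fun n => Pmono _ (hAmem n) _ (hAmem (n + 1)) (hAmono n))
    have hbdd : BddAbove (Set.range fun n => P (A n)) := by
      refine ⟨1, ?_⟩
      rintro x ⟨n, rfl⟩
      exact Ple1 _ (hAmem n)
    have hsupT : Tendsto (fun n => P (A n)) atTop (𝓝 (⨆ n, P (A n))) :=
      tendsto_atTop_ciSup hmonoP hbdd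
    exact tendsto_nhds_unique hPA hsupT
end

section
/- Let (Ω, R, P, J) be a NAP-space and fix ω₀ ∈ Ω. Then there exists a function w : Ω → ℝ such that: (i) for every ω ∈ Ω, the image of w(ω) in R multiplied by P({ω₀}) equals P({ω}) (i.e. w(ω) is the real number representing P({ω})/P({ω₀})); and (ii) for every A ⊆ Ω and every nonempty finite λ ⊆ Ω, P(A ∩ λ) · ι(∑_{ω ∈ λ} w(ω)) = P(λ) · ι(∑_{ω ∈ A ∩ λ} w(ω)), where ι : ℝ → R is the ring homomorphism; equivalently P(A|λ) = (∑_{ω ∈ A∩λ} w(ω))/(∑_{ω ∈ λ} w(ω)). -/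
/-- The type of nonempty finite subsets of `Ω`. -/
abbrev FinP (Ω : Type*) := {l : Finset Ω // l.Nonempty}

/-- In a NAP-space, fixing `ω₀`, there is a real-valued weight function
`w` with `ι(w ω) · P {ω₀} = P {ω}` for all `ω`, and the conditional probabilities
with respect to finite sets are given by the weighted-counting formula
`P(A|λ) = (∑_{ω ∈ A∩λ} w ω)/(∑_{ω ∈ λ} w ω)`. -/
theorem nap_weight_function_exists
    {Ω R : Type*} [Nonempty Ω] [Field R] [LinearOrder R] [IsStrictOrderedRing R] [Algebra ℝ R]
    (P : Set Ω → R) (φ : Set Ω → FinP Ω → ℝ)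
    (J : (FinP Ω → ℝ) →ₐ[ℝ] R)
    (nap1 : ∀ A : Set Ω, 0 ≤ P A)
    (nap2 : ∀ A : Set Ω, P A = 1 ↔ A = Set.univ)
    (nap3 : ∀ A B : Set Ω, A ∩ B = ∅ → P (A ∪ B) = P A + P B)
    (nap4a : ∀ (A : Set Ω) (l : FinP Ω),
      algebraMap ℝ R (φ A l) * P (l.1 : Set Ω) = P (A ∩ (l.1 : Set Ω)))
    (nap4b : ∀ A : Set Ω, P A = J (φ A))
    (ω₀ : Ω) :
    ∃ w : Ω → ℝ,
      (∀ ω : Ω, algebraMap ℝ R (w ω) * P {ω₀} = P {ω}) ∧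
      (∀ (A : Set Ω) (l : FinP Ω),
        P (A ∩ (l.1 : Set Ω)) * algebraMap ℝ R (∑ ω ∈ l.1, w ω)
          = P (l.1 : Set Ω) * algebraMap ℝ R (∑ ω ∈ l.1, Set.indicator A w ω)) := by
  classical
  -- P ∅ = 0
  have hPempty : P ∅ = 0 := by
    have h := nap3 ∅ ∅ (by simp)
    simp only [Set.union_self] at h
    linarith
  -- P of nonempty sets is nonzero
  have hpos : ∀ A : Set Ω, A.Nonempty → P A ≠ 0 := by
    intro A hA hP0
    have hsum : P (A ∪ Aᶜ) = P A + P Aᶜ := nap3 A Aᶜ (by simp)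
    rw [Set.union_compl_self] at hsum
    have h1 : P (Set.univ : Set Ω) = 1 := (nap2 _).mpr rfl
    have : P Aᶜ = 1 := by rw [hP0] at hsum; linarith [hsum, h1]
    have := (nap2 _).mp this
    rcases hA with ⟨x, hx⟩
    have : x ∈ Aᶜ := this ▸ Set.mem_univ x
    exact this hx
  -- additivity over finsets
  have hfin : ∀ l : Finset Ω, P (↑l : Set Ω) = ∑ ω ∈ l, P {ω} := by
    intro l
    induction l using Finset.induction with
    | empty => simpa using hPempty
    | @insert a s hnotmem ih =>
        have hdisj : ({a} : Set Ω) ∩ (↑s : Set Ω) = ∅ := by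
          ext x; simp; rintro rfl; exact hnotmem
        have : P ((↑(insert a s) : Finset Ω) : Set Ω) = P {a} + P (↑s : Set Ω) := by
          rw [Finset.coe_insert, Set.insert_eq]
          exact nap3 _ _ hdisj
        rw [this, ih, Finset.sum_insert hnotmem]
  -- define w
  have key : ∀ ω : Ω, algebraMap ℝ R (φ {ω} ⟨{ω, ω₀}, by simp⟩ / φ {ω₀} ⟨{ω, ω₀}, by simp⟩)
      * P {ω₀} = P {ω} := by
    intro ω
    set l : FinP Ω := ⟨{ω, ω₀}, by simp⟩ with hl
    have hl1 : algebraMap ℝ R (φ {ω} l) * P (↑l.1 : Set Ω) = P {ω} := by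
      rw [nap4a]
      congr 1
      simp [hl, Set.inter_eq_left, Set.subset_def]
    have hl0 : algebraMap ℝ R (φ {ω₀} l) * P (↑l.1 : Set Ω) = P {ω₀} := by
      rw [nap4a]
      congr 1
      simp [hl, Set.inter_eq_left, Set.subset_def]
    have hφ0 : φ {ω₀} l ≠ 0 := by
      intro h
      rw [h] at hl0
      exact hpos {ω₀} ⟨ω₀, rfl⟩ (by simpa using hl0.symm)
    rw [← hl1, ← hl0, ← mul_assoc, ← map_mul, div_mul_cancel₀ _ hφ0]
  refine ⟨fun ω => φ {ω} ⟨{ω, ω₀}, by simp⟩ / φ {ω₀} ⟨{ω, ω₀}, by simp⟩, key, ?_⟩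
  intro A l
  set w : Ω → ℝ := fun ω => φ {ω} ⟨{ω, ω₀}, by simp⟩ / φ {ω₀} ⟨{ω, ω₀}, by simp⟩ with hw
  have hω₀ : P ({ω₀} : Set Ω) ≠ 0 := hpos _ ⟨ω₀, rfl⟩
  apply mul_right_cancel₀ hω₀
  have h1 : algebraMap ℝ R (∑ ω ∈ l.1, w ω) * P {ω₀} = P (↑l.1 : Set Ω) := by
    rw [map_sum, Finset.sum_mul, hfin]
    exact Finset.sum_congr rfl fun ω _ => key ω
  have h2 : algebraMap ℝ R (∑ ω ∈ l.1, Set.indicator A w ω) * P {ω₀}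
      = P (A ∩ (↑l.1 : Set Ω)) := by
    have hset : A ∩ (↑l.1 : Set Ω) = (↑(l.1.filter (· ∈ A)) : Set Ω) := by
      ext x; simp [and_comm]
    rw [hset, hfin, map_sum, Finset.sum_mul]
    rw [Finset.sum_filter]
    refine Finset.sum_congr rfl fun ω _ => ?_
    by_cases hA : ω ∈ A
    · simp [Set.indicator_of_mem hA, hA, key ω]; exact key ω
    · simp [Set.indicator_of_notMem hA, hA]
  calc P (A ∩ (↑l.1 : Set Ω)) * algebraMap ℝ R (∑ ω ∈ l.1, w ω) * P {ω₀}
      = P (A ∩ (↑l.1 : Set Ω)) * (algebraMap ℝ R (∑ ω ∈ l.1, w ω) * P {ω₀}) := by ring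
    _ = P (A ∩ (↑l.1 : Set Ω)) * P (↑l.1 : Set Ω) := by rw [h1]
    _ = P (↑l.1 : Set Ω) * (algebraMap ℝ R (∑ ω ∈ l.1, Set.indicator A w ω) * P {ω₀}) := by
        rw [h2]; ring
    _ = P (↑l.1 : Set Ω) * algebraMap ℝ R (∑ ω ∈ l.1, Set.indicator A w ω) * P {ω₀} := by ring
end

section
/- Let (Ω, R, P, J) be a NAP-space, fix ω₀ ∈ Ω, and let w : Ω → ℝ be the weight function, i.e. ι(w(ω))·P({ω₀}) = P({ω}) for all ω (where ι : ℝ → R is the ring homomorphism). Then: (i) for every ω ∈ Ω, J(χ_·(ω)) = 1, where χ_λ(ω) is the function of λ equal to 1 if ω ∈ λ and 0 otherwise; and (ii) J(λ ↦ ∑_{ω ∈ λ} w(ω)) · P({ω₀}) = 1, i.e. J of the function λ ↦ ∑_{ω∈λ} w(ω) equals 1/P({ω₀}) in R. -/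
/-- In a NAP-space with weight function `w` (relative to `ω₀`):
(i) `J(χ_·(ω)) = 1` for every `ω`, and (ii) `J(λ ↦ ∑_{ω ∈ λ} w ω) = 1/P({ω₀})`. -/
theorem nap_J_char_and_total_weight
    {Ω R : Type*} [Nonempty Ω] [Field R] [LinearOrder R] [IsStrictOrderedRing R] [Algebra ℝ R]
    (P : Set Ω → R) (φ : Set Ω → FinP Ω → ℝ)
    (J : (FinP Ω → ℝ) →ₐ[ℝ] R)
    (nap1 : ∀ A : Set Ω, 0 ≤ P A)
    (nap2 : ∀ A : Set Ω, P A = 1 ↔ A = Set.univ)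
    (nap3 : ∀ A B : Set Ω, A ∩ B = ∅ → P (A ∪ B) = P A + P B)
    (nap4a : ∀ (A : Set Ω) (l : FinP Ω),
      algebraMap ℝ R (φ A l) * P (l.1 : Set Ω) = P (A ∩ (l.1 : Set Ω)))
    (nap4b : ∀ A : Set Ω, P A = J (φ A))
    (ω₀ : Ω) (w : Ω → ℝ)
    (hw : ∀ ω : Ω, algebraMap ℝ R (w ω) * P {ω₀} = P {ω}) :
    (∀ ω : Ω,
      J (fun l : FinP Ω => Set.indicator (l.1 : Set Ω) (fun _ => (1 : ℝ)) ω) = 1) ∧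
    J (fun l : FinP Ω => ∑ ω ∈ l.1, w ω) * P {ω₀} = 1 := by
  have hinj : Function.Injective (algebraMap ℝ R) := (algebraMap ℝ R).injective
  -- P ∅ = 0
  have hP0 : P ∅ = 0 := by
    have := nap3 ∅ ∅ (by simp)
    simp at this
    linarith [this]
  -- singletons have nonzero probability
  have hsing : ∀ ω : Ω, P {ω} ≠ 0 := by
    intro ω h
    have hd : ({ω} : Set Ω) ∩ {ω}ᶜ = ∅ := Set.inter_compl_self _
    have h3 := nap3 {ω} {ω}ᶜ hd
    rw [Set.union_compl_self, (nap2 Set.univ).mpr rfl, h, zero_add] at h3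
    have : ({ω}ᶜ : Set Ω) = Set.univ := (nap2 _).mp h3.symm
    have : ω ∈ ({ω}ᶜ : Set Ω) := this ▸ Set.mem_univ ω
    exact this rfl
  have hsingpos : ∀ ω : Ω, 0 < P {ω} :=
    fun ω => lt_of_le_of_ne (nap1 _) (Ne.symm (hsing ω))
  -- P of a finite set is the sum of singletons
  have hsum : ∀ s : Finset Ω, P (s : Set Ω) = ∑ ω ∈ s, P {ω} := by
    intro s
    classical
    induction s using Finset.induction_on with
    | empty => simpa using hP0
    | @insert a s ha ih =>
      have hd : ({a} : Set Ω) ∩ (s : Set Ω) = ∅ :=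
        Set.singleton_inter_eq_empty.mpr (fun h => ha (Finset.mem_coe.mp h))
      have hcoe : ((insert a s : Finset Ω) : Set Ω) = {a} ∪ (s : Set Ω) := by
        rw [Finset.coe_insert, Set.insert_eq]
      rw [hcoe, nap3 _ _ hd, ih, Finset.sum_insert ha]
  -- P of nonempty finite set is nonzero
  have hPl : ∀ l : FinP Ω, P (l.1 : Set Ω) ≠ 0 := by
    intro l
    rw [hsum l.1]
    obtain ⟨ω, hω⟩ := l.2
    have : 0 < ∑ ω ∈ l.1, P {ω} :=
      Finset.sum_pos' (fun i _ => nap1 _) ⟨ω, hω, hsingpos ω⟩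
    exact ne_of_gt this
  -- φ {ω} l = 0 when ω ∉ l
  have hφ0 : ∀ (ω : Ω) (l : FinP Ω), ω ∉ l.1 → φ {ω} l = 0 := by
    intro ω l hω
    have h4 := nap4a {ω} l
    have hint : ({ω} : Set Ω) ∩ (l.1 : Set Ω) = ∅ :=
      Set.singleton_inter_eq_empty.mpr (by simpa using hω)
    rw [hint, hP0] at h4
    have := mul_eq_zero.mp h4
    rcases this with h | h
    · exact hinj (by simpa using h)
    · exact absurd h (hPl l)
  -- φ {ω} l = φ {ω} l * indicator
  have hpart1 : ∀ ω : Ω,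
      J (fun l : FinP Ω => Set.indicator (l.1 : Set Ω) (fun _ => (1 : ℝ)) ω) = 1 := by
    intro ω
    have hfun : (φ {ω}) =
        (fun l : FinP Ω => φ {ω} l *
          Set.indicator (l.1 : Set Ω) (fun _ => (1 : ℝ)) ω) := by
      funext l
      by_cases h : ω ∈ (l.1 : Set Ω)
      · rw [Set.indicator_of_mem h, mul_one]
      · rw [Set.indicator_of_notMem h, mul_zero, hφ0 ω l (by simpa using h)]
    have hJ : J (φ {ω}) = J (φ {ω}) *
        J (fun l : FinP Ω => Set.indicator (l.1 : Set Ω) (fun _ => (1 : ℝ)) ω) := by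
      conv_lhs => rw [hfun]
      exact map_mul J _ _
    rw [← nap4b] at hJ
    exact (mul_left_cancel₀ (hsing ω) (by rw [← hJ, mul_one])).symm
  refine ⟨hpart1, ?_⟩
  -- part (ii)
  have hkey : (fun l : FinP Ω => (∑ ω ∈ l.1, w ω) * φ {ω₀} l) =
      (fun l : FinP Ω => Set.indicator (l.1 : Set Ω) (fun _ => (1 : ℝ)) ω₀) := by
    funext l
    by_cases h : ω₀ ∈ (l.1 : Set Ω)
    · rw [Set.indicator_of_mem h]
      have h4 := nap4a {ω₀} l
      have hint : ({ω₀} : Set Ω) ∩ (l.1 : Set Ω) = {ω₀} :=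
        Set.inter_eq_left.mpr (Set.singleton_subset_iff.mpr h)
      rw [hint] at h4
      -- ι(∑ w) * P {ω₀} = P l
      have hsw : algebraMap ℝ R (∑ ω ∈ l.1, w ω) * P {ω₀} = P (l.1 : Set Ω) := by
        rw [map_sum, Finset.sum_mul, hsum l.1]
        exact Finset.sum_congr rfl fun ω _ => hw ω
      have : algebraMap ℝ R ((∑ ω ∈ l.1, w ω) * φ {ω₀} l) * P (l.1 : Set Ω)
          = algebraMap ℝ R 1 * P (l.1 : Set Ω) := by
        rw [map_mul, map_one, one_mul, mul_assoc, h4, hsw]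
      have := mul_right_cancel₀ (hPl l) this
      exact hinj this
    · rw [Set.indicator_of_notMem h, hφ0 ω₀ l (by simpa using h), mul_zero]
  have hJmul : J (fun l : FinP Ω => ∑ ω ∈ l.1, w ω) * J (φ {ω₀}) = 1 := by
    rw [← map_mul]
    have : (fun l : FinP Ω => ∑ ω ∈ l.1, w ω) * (φ {ω₀}) =
        (fun l : FinP Ω => Set.indicator (l.1 : Set Ω) (fun _ => (1 : ℝ)) ω₀) := hkey
    rw [this, hpart1 ω₀]
  rw [nap4b {ω₀}]
  exact hJmul
end

section
/- Let (Ω, R, P, J) be a NAP-space, let I be an index set of arbitrary cardinality, and let (A_j)_{j ∈ I} be a family of pairwise disjoint subsets of Ω with union A = ⋃_{j ∈ I} A_j. Then for every nonempty finite λ ⊆ Ω the family of real numbers (φ_{A_j}(λ))_{j ∈ I} has only finitely many nonzero members, and P(A) = J(σ), where σ is the element of 𝔉 defined by σ(λ) = ∑_{j ∈ I} φ_{A_j}(λ) (a finitely supported sum). -/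
/-- Infinite additivity in a NAP-space: for a pairwise disjoint family
`(A j)_{j ∈ I}` the family `(φ_{A j}(λ))_j` is finitely supported for every finite
`λ`, and `P(⋃ j, A j) = J(λ ↦ ∑_j φ_{A j}(λ))`. -/
theorem nap_infinite_additivity
    {Ω R : Type*} [Nonempty Ω] [Field R] [LinearOrder R] [IsStrictOrderedRing R] [Algebra ℝ R]
    (P : Set Ω → R) (φ : Set Ω → FinP Ω → ℝ)
    (J : (FinP Ω → ℝ) →ₐ[ℝ] R)
    (nap1 : ∀ A : Set Ω, 0 ≤ P A)
    (nap2 : ∀ A : Set Ω, P A = 1 ↔ A = Set.univ)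
    (nap3 : ∀ A B : Set Ω, A ∩ B = ∅ → P (A ∪ B) = P A + P B)
    (nap4a : ∀ (A : Set Ω) (l : FinP Ω),
      algebraMap ℝ R (φ A l) * P (l.1 : Set Ω) = P (A ∩ (l.1 : Set Ω)))
    (nap4b : ∀ A : Set Ω, P A = J (φ A))
    {I : Type*} (A : I → Set Ω)
    (hdisj : ∀ i j : I, i ≠ j → A i ∩ A j = ∅) :
    (∀ l : FinP Ω, (Function.support fun j : I => φ (A j) l).Finite) ∧
    P (⋃ j : I, A j) = J (fun l : FinP Ω => ∑ᶠ j : I, φ (A j) l) := by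
  classical
  have hPuniv : P Set.univ = 1 := (nap2 _).mpr rfl
  have hP0 : P (∅ : Set Ω) = 0 := by
    have h := nap3 ∅ ∅ (by simp)
    simp at h
    linarith
  have hmono : ∀ {S T : Set Ω}, S ⊆ T → P S ≤ P T := by
    intro S T hST
    have h := nap3 S (T \ S) (by ext x; simp)
    rw [Set.union_diff_cancel hST] at h
    have := nap1 (T \ S)
    linarith
  have hpos : ∀ {B : Set Ω}, B.Nonempty → 0 < P B := by
    rintro B ⟨ω, hω⟩
    have h1 : 0 ≤ P {ω} := nap1 _
    have hne : P {ω} ≠ 0 := by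
      intro h0
      have h := nap3 {ω} {ω}ᶜ (by simp)
      rw [Set.union_compl_self, hPuniv, h0, zero_add] at h
      have hc := (nap2 _).mp h.symm
      have : ω ∈ ({ω}ᶜ : Set Ω) := hc ▸ Set.mem_univ ω
      simp at this
    have hs : ({ω} : Set Ω) ⊆ B := by simpa using hω
    exact lt_of_lt_of_le (lt_of_le_of_ne h1 (Ne.symm hne)) (hmono hs)
  have hPl : ∀ l : FinP Ω, P ((l.1 : Finset Ω) : Set Ω) ≠ 0 := fun l =>
    ne_of_gt (hpos (by exact_mod_cast Finset.coe_nonempty.mpr l.2))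
  -- finiteness of the nonempty-intersection index set
  have hsupp : ∀ l : FinP Ω, {j : I | (A j ∩ ((l.1 : Finset Ω) : Set Ω)).Nonempty}.Finite := by
    intro l
    have hch : ∀ j : {j : I | (A j ∩ ((l.1 : Finset Ω) : Set Ω)).Nonempty},
        ∃ x : Ω, x ∈ A j.1 ∩ ((l.1 : Finset Ω) : Set Ω) := fun j => j.2
    choose f hf using hch
    have hmem : ∀ j, f j ∈ (l.1 : Finset Ω) := fun j => by
      have := (hf j).2; simpa using this
    have hinj : Function.Injective (fun j => (⟨f j, hmem j⟩ : {x // x ∈ (l.1 : Finset Ω)})) := by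
      intro a b hab
      by_contra hne
      have hne' : a.1 ≠ b.1 := fun h => hne (Subtype.ext h)
      have hfab : f a = f b := congrArg Subtype.val hab
      have hx : f a ∈ A a.1 ∩ A b.1 := ⟨(hf a).1, hfab ▸ (hf b).1⟩
      rw [hdisj a.1 b.1 hne'] at hx
      exact hx
    haveI : Finite {j : I | (A j ∩ ((l.1 : Finset Ω) : Set Ω)).Nonempty} :=
      Finite.of_injective _ hinj
    exact Set.toFinite _
  have halg_inj : Function.Injective (algebraMap ℝ R) := RingHom.injective _
  have hφsupp : ∀ l : FinP Ω, (Function.support fun j : I => φ (A j) l) ⊆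
      {j : I | (A j ∩ ((l.1 : Finset Ω) : Set Ω)).Nonempty} := by
    intro l j hj
    rw [Function.mem_support] at hj
    rw [Set.mem_setOf_eq, Set.nonempty_iff_ne_empty]
    intro hempty
    have h4 := nap4a (A j) l
    rw [hempty, hP0] at h4
    rcases mul_eq_zero.mp h4 with h | h
    · exact hj (halg_inj (h.trans (map_zero _).symm))
    · exact hPl l h
  -- finite additivity
  have hfinadd : ∀ (B : I → Set Ω), (∀ i j : I, i ≠ j → B i ∩ B j = ∅) →
      ∀ s : Finset I, P (⋃ j ∈ s, B j) = ∑ j ∈ s, P (B j) := by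
    intro B hB s
    induction s using Finset.induction_on with
    | empty => simp [hP0]
    | @insert a s ha ih =>
      rw [Finset.sum_insert ha, ← ih, Finset.set_biUnion_insert]
      apply nap3
      ext x
      simp only [Set.mem_inter_iff, Set.mem_iUnion, Set.mem_empty_iff_false, iff_false, not_and]
      rintro hxa ⟨j, hj, hxj⟩
      have hx : x ∈ B a ∩ B j := ⟨hxa, hxj⟩
      rw [hB a j (fun h => ha (h ▸ hj))] at hx
      exact hx
  refine ⟨fun l => (hsupp l).subset (hφsupp l), ?_⟩
  rw [nap4b]
  congr 1
  funext l
  set S := (hsupp l).toFinset with hS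
  have hsum : ∑ᶠ j : I, φ (A j) l = ∑ j ∈ S, φ (A j) l :=
    finsum_eq_finset_sum_of_support_subset _ (by
      intro j hj
      simpa [hS, Set.Finite.coe_toFinset] using hφsupp l hj)
  have hunion : (⋃ j : I, A j) ∩ ((l.1 : Finset Ω) : Set Ω) =
      ⋃ j ∈ S, (A j ∩ ((l.1 : Finset Ω) : Set Ω)) := by
    ext x
    simp only [Set.mem_inter_iff, Set.mem_iUnion, hS, Set.Finite.mem_toFinset, Set.mem_setOf_eq]
    constructor
    · rintro ⟨⟨j, hj⟩, hl⟩
      exact ⟨j, ⟨x, hj, hl⟩, hj, hl⟩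
    · rintro ⟨j, _, hj, hl⟩
      exact ⟨⟨j, hj⟩, hl⟩
  have hdisj' : ∀ i j : I, i ≠ j →
      (A i ∩ ((l.1 : Finset Ω) : Set Ω)) ∩ (A j ∩ ((l.1 : Finset Ω) : Set Ω)) = ∅ := by
    intro i j hij
    apply Set.eq_empty_of_subset_empty
    rw [← hdisj i j hij]
    rintro x ⟨⟨h1, -⟩, ⟨h2, -⟩⟩
    exact ⟨h1, h2⟩
  have key : algebraMap ℝ R (φ (⋃ j : I, A j) l) * P ((l.1 : Finset Ω) : Set Ω) =
      algebraMap ℝ R (∑ᶠ j : I, φ (A j) l) * P ((l.1 : Finset Ω) : Set Ω) := by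
    rw [nap4a, hunion, hfinadd _ hdisj' S, hsum, map_sum, Finset.sum_mul]
    exact Finset.sum_congr rfl fun j _ => (nap4a (A j) l).symm
  exact halg_inj (mul_right_cancel₀ (hPl l) key)
end

section
/- Let (Ω, R, P, J) be a NAP-space with Ω infinite. Then the kernel of the ℝ-algebra homomorphism J : 𝔉 → R is a fine ideal of 𝔉: it is a maximal ideal, and for every ω ∈ Ω the function λ ↦ 1 − χ_λ(ω) belongs to ker(J), where χ_λ(ω) = 1 if ω ∈ λ and 0 otherwise. -/
/-- In a NAP-space with `Ω` infinite, the kernel of `J` is a fine ideal: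
it is maximal and contains all the functions `λ ↦ 1 − χ_λ(ω)`. -/
theorem nap_ker_J_fine
    {Ω R : Type*} [Infinite Ω] [Field R] [LinearOrder R] [IsStrictOrderedRing R] [Algebra ℝ R]
    (P : Set Ω → R) (φ : Set Ω → FinP Ω → ℝ)
    (J : (FinP Ω → ℝ) →ₐ[ℝ] R)
    (nap1 : ∀ A : Set Ω, 0 ≤ P A)
    (nap2 : ∀ A : Set Ω, P A = 1 ↔ A = Set.univ)
    (nap3 : ∀ A B : Set Ω, A ∩ B = ∅ → P (A ∪ B) = P A + P B)
    (nap4a : ∀ (A : Set Ω) (l : FinP Ω),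
      algebraMap ℝ R (φ A l) * P (l.1 : Set Ω) = P (A ∩ (l.1 : Set Ω)))
    (nap4b : ∀ A : Set Ω, P A = J (φ A)) :
    (RingHom.ker (J : (FinP Ω → ℝ) →+* R)).IsMaximal ∧
    ∀ ω : Ω,
      (fun l : FinP Ω => 1 - Set.indicator (l.1 : Set Ω) (fun _ => (1 : ℝ)) ω)
        ∈ RingHom.ker (J : (FinP Ω → ℝ) →+* R) := by
  -- P ∅ = 0
  have hP0 : P ∅ = 0 := by
    have h := nap3 ∅ ∅ (by simp)
    simp only [Set.union_empty] at h
    linarith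
  -- Every singleton has nonzero probability
  have hsing : ∀ ω : Ω, P {ω} ≠ 0 := by
    intro ω h
    have hdisj : ({ω}ᶜ : Set Ω) ∩ {ω} = ∅ := by simp
    have h1 : P ({ω}ᶜ ∪ {ω}) = P {ω}ᶜ + P {ω} := nap3 _ _ hdisj
    rw [Set.compl_union_self, h, add_zero] at h1
    have h2 : P (Set.univ : Set Ω) = 1 := (nap2 _).mpr rfl
    have h3 : ({ω}ᶜ : Set Ω) = Set.univ := (nap2 _).mp (h1.symm.trans h2)
    have : ω ∈ ({ω}ᶜ : Set Ω) := h3 ▸ Set.mem_univ ω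
    simp at this
  -- every nonempty finite set has nonzero probability
  have hPl : ∀ l : FinP Ω, P (l.1 : Set Ω) ≠ 0 := by
    intro l hl
    obtain ⟨ω, hω⟩ := l.2
    have hωs : ω ∈ (l.1 : Set Ω) := by exact_mod_cast hω
    have hdisj : ({ω} : Set Ω) ∩ ((l.1 : Set Ω) \ {ω}) = ∅ := by
      ext x; simp
    have hun : ({ω} : Set Ω) ∪ ((l.1 : Set Ω) \ {ω}) = (l.1 : Set Ω) := by
      rw [Set.union_diff_self, Set.union_eq_self_of_subset_left]
      simpa using hωs
    have h1 : P (l.1 : Set Ω) = P {ω} + P ((l.1 : Set Ω) \ {ω}) := by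
      have := nap3 _ _ hdisj
      rwa [hun] at this
    rw [hl] at h1
    have h2 := nap1 ({ω} : Set Ω)
    have h3 := nap1 ((l.1 : Set Ω) \ {ω})
    exact hsing ω (le_antisymm (by linarith) h2)
  have hinj : Function.Injective (algebraMap ℝ R) := RingHom.injective _
  constructor
  · -- maximality
    rw [Ideal.isMaximal_iff]
    constructor
    · intro h
      rw [RingHom.mem_ker, map_one] at h
      exact one_ne_zero h
    · intro I x hle hx hxI
      have hJx : J x ≠ 0 := fun h => hx (RingHom.mem_ker.mpr h)
      set χ : FinP Ω → ℝ := fun l => if x l = 0 then 1 else 0 with hχ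
      set g : FinP Ω → ℝ := fun l => (x l)⁻¹ with hg
      have hxχ : x * χ = 0 := by
        funext l
        simp only [Pi.mul_apply, Pi.zero_apply, hχ]
        by_cases h : x l = 0 <;> simp [h]
      have hJχ : J χ = 0 := by
        have := congrArg J hxχ
        rw [map_mul, map_zero] at this
        exact (mul_eq_zero.mp this).resolve_left hJx
      have hxg : x * g = 1 - χ := by
        funext l
        simp only [Pi.mul_apply, Pi.sub_apply, Pi.one_apply, hχ, hg]
        by_cases h : x l = 0 <;> simp [h]
      have hker : (1 : FinP Ω → ℝ) - x * g ∈ RingHom.ker (J : (FinP Ω → ℝ) →+* R) := by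
        rw [RingHom.mem_ker, map_sub, map_one, hxg, map_sub, map_one]
        show 1 - (1 - J χ) = 0
        rw [hJχ]; ring
      have h1 : (1 : FinP Ω → ℝ) - x * g ∈ I := hle hker
      have h2 : x * g ∈ I := I.mul_mem_right g hxI
      have := I.add_mem h1 h2
      simpa using this
  · -- fineness
    intro ω
    set f : FinP Ω → ℝ := φ {ω} with hf
    have hfz : ∀ l : FinP Ω, ω ∉ (l.1 : Set Ω) → f l = 0 := by
      intro l hω
      have h := nap4a {ω} l
      have hint : ({ω} : Set Ω) ∩ (l.1 : Set Ω) = ∅ := by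
        ext x; simp; rintro rfl; exact hω
      rw [hint, hP0] at h
      rcases mul_eq_zero.mp h with h | h
      · exact hinj (by simpa using h)
      · exact absurd h (hPl l)
    set hfun : FinP Ω → ℝ :=
      fun l : FinP Ω => 1 - Set.indicator (l.1 : Set Ω) (fun _ => (1 : ℝ)) ω with hh
    have hmul : f * hfun = 0 := by
      funext l
      simp only [Pi.mul_apply, Pi.zero_apply, hh]
      by_cases h : ω ∈ (l.1 : Set Ω)
      · rw [Set.indicator_of_mem h]; ring
      · rw [hfz l h]; ring
    have hJf : J f ≠ 0 := by
      rw [hf, ← nap4b]; exact hsing ω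
    have := congrArg J hmul
    rw [map_mul, map_zero] at this
    exact RingHom.mem_ker.mpr ((mul_eq_zero.mp this).resolve_left hJf)
end

section
/- For every infinite set Ω and every weight function w : Ω → ℝ with w(ω) > 0 for all ω ∈ Ω, there exists a NAP-space (Ω, R, P, J) (satisfying (NAP0)–(NAP4)) whose conditional probabilities are given by the weights: for every A ⊆ Ω and every nonempty finite λ ⊆ Ω, φ_A(λ) = (∑_{ω ∈ A ∩ λ} w(ω))/(∑_{ω ∈ λ} w(ω)). In particular the NAP axioms are consistent. -/
noncomputable section NapAux

instance FinP.instSemilatticeSup (Ω : Type*) [DecidableEq Ω] : SemilatticeSup (FinP Ω) :=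
  Subtype.semilatticeSup fun _ _ h1 _ => h1.mono Finset.subset_union_left

/-- Sum of an indicator over a superset. -/
lemma sum_indicator_finset_subset {Ω : Type*} (f : Ω → ℝ) {s t : Finset Ω} (h : s ⊆ t) :
    ∑ ω ∈ t, Set.indicator (↑s) f ω = ∑ ω ∈ s, f ω := by
  rw [← Finset.sum_subset h (fun x _ hx => Set.indicator_of_notMem (by simpa using hx) f)]
  exact Finset.sum_congr rfl fun x hx => Set.indicator_of_mem (by simpa using hx) f

end NapAux

/-- For every infinite `Ω` and strictly positive weight function `w`,
there exists a NAP-space `(Ω, R, P, J)` satisfying (NAP0)–(NAP4) whose conditional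
probabilities are `φ_A(λ) = (∑_{ω ∈ A∩λ} w ω)/(∑_{ω ∈ λ} w ω)`; in particular the
NAP axioms are consistent. Here `J` being an ℝ-algebra homomorphism is expressed by
`J` being a ring homomorphism sending constants to their images under `ι`. -/
theorem nap_space_exists
    {Ω : Type} [Infinite Ω] (w : Ω → ℝ) (hw : ∀ ω : Ω, 0 < w ω) :
    ∃ (R : Type) (instR : Field R) (instLO : LinearOrder R)
      (instSOR : IsStrictOrderedRing R) (ι : ℝ →+* R)
      (P : Set Ω → R) (J : (FinP Ω → ℝ) →+* R),
      (∀ r : ℝ, J (fun _ => r) = ι r) ∧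
      (∀ A : Set Ω, 0 ≤ P A) ∧
      (∀ A : Set Ω, P A = 1 ↔ A = Set.univ) ∧
      (∀ A B : Set Ω, A ∩ B = ∅ → P (A ∪ B) = P A + P B) ∧
      (∀ (A : Set Ω) (l : FinP Ω),
        ι ((∑ ω ∈ l.1, Set.indicator A w ω) / (∑ ω ∈ l.1, w ω)) * P (l.1 : Set Ω)
          = P (A ∩ (l.1 : Set Ω))) ∧
      (∀ A : Set Ω,
        P A = J (fun l : FinP Ω =>
          (∑ ω ∈ l.1, Set.indicator A w ω) / (∑ ω ∈ l.1, w ω))) := by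
  classical
  haveI : Nonempty Ω := inferInstance
  haveI : Nonempty (FinP Ω) := ⟨⟨{Classical.arbitrary Ω}, Finset.singleton_nonempty _⟩⟩
  -- the ultrafilter refining the "eventually contains λ₀" filter
  set U : Ultrafilter (FinP Ω) := Ultrafilter.of Filter.atTop with hUdef
  have hU : ∀ l0 : FinP Ω, {l : FinP Ω | l0.1 ⊆ l.1} ∈ U := by
    intro l0
    refine Ultrafilter.of_le Filter.atTop ?_
    filter_upwards [Filter.eventually_ge_atTop l0] with l hl
    exact hl
  -- basic facts about the weights
  have hden : ∀ l : FinP Ω, 0 < ∑ ω ∈ l.1, w ω := fun l =>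
    Finset.sum_pos (fun ω _ => hw ω) l.2
  set φ : Set Ω → FinP Ω → ℝ :=
    fun A l => (∑ ω ∈ l.1, Set.indicator A w ω) / (∑ ω ∈ l.1, w ω) with hφdef
  refine ⟨Filter.Germ (U : Filter (FinP Ω)) ℝ, inferInstance, inferInstance, inferInstance,
    (Filter.Germ.coeRingHom (U : Filter (FinP Ω))).comp (Pi.constRingHom (FinP Ω) ℝ),
    fun A => Filter.Germ.coeRingHom (U : Filter (FinP Ω)) (φ A),
    Filter.Germ.coeRingHom (U : Filter (FinP Ω)), fun r => rfl, ?_, ?_, ?_, ?_, fun A => rfl⟩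
  · -- NAP1
    intro A
    rw [show (0 : Filter.Germ (U : Filter (FinP Ω)) ℝ)
        = Filter.Germ.coeRingHom (U : Filter (FinP Ω)) 0 from (map_zero _).symm]
    refine Filter.Germ.coe_le.2 (Filter.Eventually.of_forall fun l => ?_)
    exact div_nonneg (Finset.sum_nonneg fun ω _ => Set.indicator_nonneg (fun x _ => (hw x).le) ω)
      (hden l).le
  · -- NAP2
    intro A
    constructor
    · intro h
      by_contra hA
      obtain ⟨ω0, hω0⟩ : ∃ ω0, ω0 ∉ A := by
        by_contra h'
        push_neg at h'
        exact hA (Set.eq_univ_of_forall h')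
      have h' : (φ A : Filter.Germ (U : Filter (FinP Ω)) ℝ) = ((1 : FinP Ω → ℝ) : _) := by
        rw [show ((1 : FinP Ω → ℝ) : Filter.Germ (U : Filter (FinP Ω)) ℝ)
          = 1 from map_one (Filter.Germ.coeRingHom (U : Filter (FinP Ω)))]
        exact h
      have h1 : φ A =ᶠ[(U : Filter (FinP Ω))] (1 : FinP Ω → ℝ) := Filter.Germ.coe_eq.1 h' 
      have h2 : {l : FinP Ω | ({ω0} : Finset Ω) ⊆ l.1} ∈ U :=
        hU ⟨{ω0}, Finset.singleton_nonempty _⟩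
      obtain ⟨l, hl1, hl2⟩ := (h1.and (Filter.eventually_iff.2 h2)).exists
      have hωl : ω0 ∈ l.1 := by simpa using hl2
      have hnum : ∑ ω ∈ l.1, Set.indicator A w ω ≤ (∑ ω ∈ l.1, w ω) - w ω0 := by
        rw [← Finset.sum_erase _ (Set.indicator_of_notMem hω0 w),
            ← Finset.sum_erase_eq_sub hωl]
        exact Finset.sum_le_sum fun ω _ => Set.indicator_le_self' (fun x _ => (hw x).le) ω
      have : φ A l < 1 := by
        rw [hφdef, div_lt_one (hden l)]
        exact lt_of_le_of_lt hnum (by linarith [hw ω0])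
      rw [show φ A l = 1 from hl1] at this
      exact lt_irrefl 1 this
    · rintro rfl
      have : φ Set.univ = fun _ => (1:ℝ) := by
        funext l
        simp [hφdef, Set.indicator_univ, (hden l).ne']
      show Filter.Germ.coeRingHom (U : Filter (FinP Ω)) (φ Set.univ) = 1
      rw [this, show ((fun _ => (1:ℝ)) : FinP Ω → ℝ) = 1 from rfl, map_one]
  · -- NAP3
    intro A B hAB
    have : φ (A ∪ B) = φ A + φ B := by
      funext l
      have hd : Disjoint A B := Set.disjoint_iff_inter_eq_empty.2 hAB
      simp only [hφdef, Pi.add_apply, Set.indicator_union_of_disjoint hd,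
        Finset.sum_add_distrib, add_div]
    show Filter.Germ.coeRingHom (U : Filter (FinP Ω)) (φ (A ∪ B)) = _
    rw [this, map_add]
  · -- NAP4 product identity
    intro A l0
    show Filter.Germ.coeRingHom (U : Filter (FinP Ω)) (Pi.constRingHom (FinP Ω) ℝ (φ A l0))
        * Filter.Germ.coeRingHom (U : Filter (FinP Ω)) (φ (↑l0.1))
        = Filter.Germ.coeRingHom (U : Filter (FinP Ω)) (φ (A ∩ ↑l0.1))
    rw [← map_mul]
    refine Filter.Germ.coe_eq.2 ?_
    filter_upwards [hU l0] with l hl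
    have h1 : ∑ ω ∈ l.1, Set.indicator (↑l0.1) w ω = ∑ ω ∈ l0.1, w ω :=
      sum_indicator_finset_subset w hl
    have h2 : ∑ ω ∈ l.1, Set.indicator (A ∩ ↑l0.1) w ω
        = ∑ ω ∈ l0.1, Set.indicator A w ω := by
      rw [Set.inter_comm, ← Set.indicator_indicator]
      exact sum_indicator_finset_subset _ hl
    show φ A l0 * φ (↑l0.1) l = φ (A ∩ ↑l0.1) l
    have hs : (∑ ω ∈ l0.1, w ω) ≠ 0 := (hden l0).ne'
    simp only [hφdef, h1, h2]
    rw [div_mul_div_comm, mul_comm (∑ ω ∈ l0.1, w ω) (∑ ω ∈ l.1, w ω),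
      mul_div_mul_right _ _ hs]
end

section
/- Let (Ω, R, P, J) be a NAP-space and let Λ be a directed set of nonempty finite subsets of Ω (any two elements of Λ are contained in a common element of Λ, and the union of all elements of Λ is Ω). Assume J annihilates every φ ∈ 𝔉 with φ(λ) = 0 for all λ ∈ Λ. Then the Λ-property holds: for all A, B ⊆ Ω, if P(A ∩ λ) = P(B ∩ λ) for every λ ∈ Λ, then P(A) = P(B). -/
/-- If `Λ` is a directed set of nonempty finite subsets of `Ω` covering
`Ω` and `J` annihilates every function vanishing on `Λ`, then the Λ-property holds:
events having the same probability on every trace over `Λ` have the same probability. -/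
theorem nap_Lambda_property
    {Ω R : Type*} [Nonempty Ω] [Field R] [LinearOrder R] [IsStrictOrderedRing R] [Algebra ℝ R]
    (P : Set Ω → R) (φ : Set Ω → FinP Ω → ℝ)
    (J : (FinP Ω → ℝ) →ₐ[ℝ] R)
    (nap1 : ∀ A : Set Ω, 0 ≤ P A)
    (nap2 : ∀ A : Set Ω, P A = 1 ↔ A = Set.univ)
    (nap3 : ∀ A B : Set Ω, A ∩ B = ∅ → P (A ∪ B) = P A + P B)
    (nap4a : ∀ (A : Set Ω) (l : FinP Ω),
      algebraMap ℝ R (φ A l) * P (l.1 : Set Ω) = P (A ∩ (l.1 : Set Ω)))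
    (nap4b : ∀ A : Set Ω, P A = J (φ A))
    (Λ : Set (FinP Ω))
    (hdir : ∀ l₁ ∈ Λ, ∀ l₂ ∈ Λ, ∃ μ ∈ Λ,
      (l₁ : FinP Ω).1 ⊆ (μ : FinP Ω).1 ∧ (l₂ : FinP Ω).1 ⊆ (μ : FinP Ω).1)
    (hcover : (⋃ l ∈ Λ, ((l : FinP Ω).1 : Set Ω)) = Set.univ)
    (hann : ∀ ψ : FinP Ω → ℝ, (∀ l ∈ Λ, ψ l = 0) → J ψ = 0) :
    ∀ A B : Set Ω,
      (∀ l ∈ Λ, P (A ∩ ((l : FinP Ω).1 : Set Ω)) = P (B ∩ ((l : FinP Ω).1 : Set Ω))) →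
      P A = P B := by
  intro A B hAB
  -- P of any nonempty finite set is nonzero
  have hpos : ∀ l : FinP Ω, P (l.1 : Set Ω) ≠ 0 := by
    intro l hl0
    have hsplit : P ((l.1 : Set Ω) ∪ (l.1 : Set Ω)ᶜ) = P (l.1 : Set Ω) + P (l.1 : Set Ω)ᶜ :=
      nap3 _ _ (by simp [Set.inter_compl_self])
    rw [Set.union_compl_self] at hsplit
    have huniv : P (Set.univ : Set Ω) = 1 := (nap2 _).mpr rfl
    have hc : P ((l.1 : Set Ω)ᶜ) = 1 := by
      rw [huniv, hl0, zero_add] at hsplit; exact hsplit.symm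
    have := (nap2 _).mp hc
    have hne : ((l.1 : Set Ω)) ≠ ∅ := by
      exact Set.Nonempty.ne_empty (by exact_mod_cast l.2)
    apply hne
    rw [← compl_compl ((l.1 : Set Ω)), this, Set.compl_univ]
  -- φ A and φ B agree on Λ
  have hphi : ∀ l ∈ Λ, φ A l = φ B l := by
    intro l hl
    have h1 := nap4a A l
    have h2 := nap4a B l
    rw [hAB l hl, ← h2] at h1
    have := mul_right_cancel₀ (hpos l) h1
    exact_mod_cast (algebraMap ℝ R).injective this
  have hz : J (φ A - φ B) = 0 := by
    apply hann
    intro l hl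
    simp [hphi l hl]
  rw [map_sub] at hz
  rw [nap4b A, nap4b B]
  linarith [hz]
end

section
/- Let φ, ψ ∈ 𝔉. If φ and ψ are eventually different on Λ, i.e. there exists λ₀ ∈ Λ such that φ(λ) ≠ ψ(λ) for every λ ∈ Λ with λ₀ ⊆ λ, then J(φ) ≠ J(ψ). -/
/-- If `φ` and `ψ` are eventually different on the directed family `Λ`,
then their Λ-limits differ: `J(φ) ≠ J(ψ)`. -/
theorem Lambda_limit_eventually_different
    {Ω R : Type*} [Infinite Ω] [Field R] [Algebra ℝ R]
    (J : (FinP Ω → ℝ) →ₐ[ℝ] R)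
    (Λ : Set (FinP Ω))
    (hdir : ∀ l₁ ∈ Λ, ∀ l₂ ∈ Λ, ∃ μ ∈ Λ,
      (l₁ : FinP Ω).1 ⊆ (μ : FinP Ω).1 ∧ (l₂ : FinP Ω).1 ⊆ (μ : FinP Ω).1)
    (hcover : (⋃ l ∈ Λ, ((l : FinP Ω).1 : Set Ω)) = Set.univ)
    (hann : ∀ χ : FinP Ω → ℝ, (∀ l ∈ Λ, χ l = 0) → J χ = 0)
    (hfine : ∀ ω : Ω,
      J (fun l : FinP Ω => Set.indicator (l.1 : Set Ω) (fun _ => (1 : ℝ)) ω) = 1)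
    (φ ψ : FinP Ω → ℝ) (l₀ : FinP Ω) (hl₀ : l₀ ∈ Λ)
    (hne : ∀ l ∈ Λ, l₀.1 ⊆ (l : FinP Ω).1 → φ l ≠ ψ l) :
    J φ ≠ J ψ := by
  intro h
  -- the "eventually" indicator
  set e : FinP Ω → ℝ :=
    fun l => ∏ ω ∈ l₀.1, Set.indicator (l.1 : Set Ω) (fun _ => (1 : ℝ)) ω with he
  have hJe : J e = 1 := by
    have : e = ∏ ω ∈ l₀.1,
        (fun l : FinP Ω => Set.indicator (l.1 : Set Ω) (fun _ => (1 : ℝ)) ω) := by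
      funext l
      simp [he, Finset.prod_apply]
    rw [this, map_prod]
    simp [hfine]
  have hesub : ∀ l : FinP Ω, l₀.1 ⊆ l.1 → e l = 1 := by
    intro l hsub
    simp only [he]
    apply Finset.prod_eq_one
    intro ω hω
    simp only [Set.indicator_of_mem (Finset.mem_coe.mpr (hsub hω))]
  have hensub : ∀ l : FinP Ω, ¬ l₀.1 ⊆ l.1 → e l = 0 := by
    intro l hsub
    obtain ⟨ω, hω, hωl⟩ := Finset.not_subset.mp hsub
    simp only [he]
    apply Finset.prod_eq_zero hω
    simp only [Set.indicator_of_notMem (fun hc => hωl (Finset.mem_coe.mp hc))]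
  set θ : FinP Ω → ℝ := fun l => (φ l - ψ l)⁻¹ with hθ
  set χ : FinP Ω → ℝ := fun l => θ l * (φ l - ψ l) * e l - e l with hχ
  have hJχ : J χ = 0 := by
    apply hann
    intro l hl
    by_cases hsub : l₀.1 ⊆ l.1
    · have hne' : φ l - ψ l ≠ 0 := sub_ne_zero.mpr (hne l hl hsub)
      simp [hχ, hθ, inv_mul_cancel₀ hne']
    · simp [hχ, hensub l hsub]
  have hχeq : χ = θ * (φ - ψ) * e - e := by
    funext l; simp [hχ]
  rw [hχeq, map_sub, map_mul, map_mul, map_sub, h, sub_self, mul_zero, zero_mul,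
    zero_sub, hJe] at hJχ
  exact one_ne_zero (neg_eq_zero.mp hJχ)
end

section
/- Let φ ∈ 𝔉 and let r₁, …, rₙ be finitely many real numbers such that φ(λ) ∈ {r₁, …, rₙ} for every λ ∈ Λ. Then there exists j ∈ {1, …, n} such that J(φ) equals the image of r_j in R. -/
/-- If `φ` takes, on the nonempty directed family `Λ`, only the finitely
many values `r 1, …, r n`, then its Λ-limit `J(φ)` is the image in `R` of one of them. -/
theorem Lambda_limit_finite_range
    {Ω R : Type*} [Infinite Ω] [Field R] [Algebra ℝ R]
    (J : (FinP Ω → ℝ) →ₐ[ℝ] R)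
    (Λ : Set (FinP Ω)) (hΛ : Λ.Nonempty)
    (hdir : ∀ l₁ ∈ Λ, ∀ l₂ ∈ Λ, ∃ μ ∈ Λ,
      (l₁ : FinP Ω).1 ⊆ (μ : FinP Ω).1 ∧ (l₂ : FinP Ω).1 ⊆ (μ : FinP Ω).1)
    (hcover : (⋃ l ∈ Λ, ((l : FinP Ω).1 : Set Ω)) = Set.univ)
    (hann : ∀ χ : FinP Ω → ℝ, (∀ l ∈ Λ, χ l = 0) → J χ = 0)
    (φ : FinP Ω → ℝ) (n : ℕ) (r : Fin n → ℝ)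
    (hrange : ∀ l ∈ Λ, ∃ j : Fin n, φ l = r j) :
    ∃ j : Fin n, J φ = algebraMap ℝ R (r j) := by
  set ψ : FinP Ω → ℝ := ∏ j : Fin n, (φ - fun _ => r j) with hψ
  have hψ0 : J ψ = 0 := by
    apply hann
    intro l hl
    obtain ⟨j, hj⟩ := hrange l hl
    rw [hψ, Finset.prod_apply]
    exact Finset.prod_eq_zero (Finset.mem_univ j) (by simp [hj])
  have hJψ : J ψ = ∏ j : Fin n, (J φ - algebraMap ℝ R (r j)) := by
    rw [hψ, map_prod]
    congr 1
    funext j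
    rw [map_sub]
    congr 1
    exact (J.commutes (r j)).symm ▸ rfl
  rw [hJψ] at hψ0
  obtain ⟨j, _, hj⟩ := Finset.prod_eq_zero_iff.mp hψ0
  exact ⟨j, sub_eq_zero.mp hj⟩
end

section
/- Let (Ω, R, P, J) be a fair NAP-space, i.e. P({ω}) = P({τ}) for all ω, τ ∈ Ω. Then for all A, B ⊆ Ω with B nonempty, the conditional probability P(A|B) = P(A ∩ B)/P(B) is the J-image of a rational-valued function: there exists φ ∈ 𝔉 such that φ(λ) is a rational number for every nonempty finite λ ⊆ Ω and P(A ∩ B) = P(B) · J(φ). -/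
/-- In a fair NAP-space, every conditional probability `P(A|B)` with
`B` nonempty is the `J`-image of a rational-valued function: there is `ψ ∈ 𝔉` with
all values rational such that `P(A ∩ B) = P(B) · J(ψ)`. -/
theorem nap_fair_conditional_hyperrational
    {Ω R : Type*} [Nonempty Ω] [Field R] [LinearOrder R] [IsStrictOrderedRing R] [Algebra ℝ R]
    (P : Set Ω → R) (φ : Set Ω → FinP Ω → ℝ)
    (J : (FinP Ω → ℝ) →ₐ[ℝ] R)
    (nap1 : ∀ A : Set Ω, 0 ≤ P A)
    (nap2 : ∀ A : Set Ω, P A = 1 ↔ A = Set.univ)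
    (nap3 : ∀ A B : Set Ω, A ∩ B = ∅ → P (A ∪ B) = P A + P B)
    (nap4a : ∀ (A : Set Ω) (l : FinP Ω),
      algebraMap ℝ R (φ A l) * P (l.1 : Set Ω) = P (A ∩ (l.1 : Set Ω)))
    (nap4b : ∀ A : Set Ω, P A = J (φ A))
    (fair : ∀ ω τ : Ω, P {ω} = P {τ}) :
    ∀ A B : Set Ω, B.Nonempty →
      ∃ ψ : FinP Ω → ℝ, (∀ l : FinP Ω, ∃ q : ℚ, ψ l = (q : ℝ)) ∧
        P (A ∩ B) = P B * J ψ := by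
  classical
  intro A B _hB
  set ω₀ := Classical.arbitrary Ω with hω₀
  set c : R := P {ω₀} with hc
  -- P of empty set is 0
  have hPempty : P (∅ : Set Ω) = 0 := by
    have h := nap3 ∅ ∅ (by simp)
    simp at h
    linarith
  -- P of a finite set
  have hsum : ∀ s : Finset Ω, P (↑s : Set Ω) = (s.card : R) * c := by
    intro s
    induction s using Finset.induction_on with
    | empty =>
      simp only [Finset.coe_empty, Finset.card_empty, Nat.cast_zero, zero_mul]
      exact hPempty
    | @insert a s ha ih =>
      have hcoe : ((insert a s : Finset Ω) : Set Ω) = {a} ∪ (↑s : Set Ω) := by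
        rw [Finset.coe_insert, Set.insert_eq]
      have hdisj : ({a} : Set Ω) ∩ (↑s : Set Ω) = ∅ := by
        ext x; simp; rintro rfl; exact ha
      have h3 := nap3 {a} (↑s) hdisj
      rw [hcoe, h3, ih, fair a ω₀, Finset.card_insert_of_notMem ha]
      push_cast
      ring
  -- P of an intersection with a finite set
  have hAint : ∀ (C : Set Ω) (s : Finset Ω),
      P (C ∩ ↑s) = ((s.filter (· ∈ C)).card : R) * c := by
    intro C s
    have : C ∩ ↑s = ↑(s.filter (· ∈ C)) := by
      ext x; simp [and_comm]
    rw [this, hsum]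
  -- c ≠ 0
  have hc0 : c ≠ 0 := by
    intro h
    have huniv : P Set.univ = 1 := (nap2 _).mpr rfl
    have hsplit := nap3 {ω₀} {ω₀}ᶜ (by simp)
    rw [Set.union_compl_self, huniv, ← hc, h, zero_add] at hsplit
    have : ({ω₀}ᶜ : Set Ω) = Set.univ := (nap2 _).mp hsplit.symm
    have : ({ω₀} : Set Ω) = ∅ := by
      rw [← compl_compl ({ω₀} : Set Ω), this, Set.compl_univ]
    exact (Set.singleton_nonempty ω₀).ne_empty this
  obtain ⟨f, hf⟩ : ∃ f : Set Ω → FinP Ω → ℕ,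
      ∀ (C : Set Ω) (l : FinP Ω), f C l = (l.1.filter (· ∈ C)).card :=
    ⟨fun C l => (l.1.filter (· ∈ C)).card, fun _ _ => rfl⟩
  -- value of φ
  have hφ : ∀ (C : Set Ω) (l : FinP Ω),
      φ C l = (f C l : ℝ) / (l.1.card : ℝ) := by
    intro C l
    have h4 := nap4a C l
    rw [hsum, hAint] at h4
    have hncard : (l.1.card : ℝ) ≠ 0 :=
      Nat.cast_ne_zero.mpr (Finset.card_pos.mpr l.2).ne'
    have h4' : algebraMap ℝ R (φ C l) * (l.1.card : R)
        = ((l.1.filter (· ∈ C)).card : R) :=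
      mul_right_cancel₀ hc0 (by rw [mul_assoc]; exact h4)
    have hinj : Function.Injective (algebraMap ℝ R) := (algebraMap ℝ R).injective
    have hre : φ C l * (l.1.card : ℝ) = ((l.1.filter (· ∈ C)).card : ℝ) := by
      apply hinj
      rw [map_mul, map_natCast, map_natCast]
      exact h4'
    rw [eq_div_iff hncard, hf]
    exact hre
  -- the rational-valued function
  refine ⟨fun l => (f (A ∩ B) l : ℝ) / (f B l : ℝ), ?_, ?_⟩
  · intro l
    exact ⟨((f (A ∩ B) l : ℚ)) / ((f B l : ℚ)), by push_cast; ring⟩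
  · have hfun : φ (A ∩ B) = fun l => φ B l * ((f (A ∩ B) l : ℝ) / (f B l : ℝ)) := by
      funext l
      rw [hφ, hφ]
      have hn : ((l.1.card : ℕ) : ℝ) ≠ 0 :=
        Nat.cast_ne_zero.mpr (Finset.card_pos.mpr l.2).ne'
      by_cases hb : f B l = 0
      · have hab : f (A ∩ B) l ≤ f B l := by
          rw [hf, hf]
          refine Finset.card_le_card ?_
          intro x hx
          simp only [Finset.mem_filter] at hx ⊢
          exact ⟨hx.1, hx.2.2⟩
        have ha : f (A ∩ B) l = 0 := Nat.le_zero.mp (hb ▸ hab)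
        rw [ha, hb]
        simp
      · have hb' : ((f B l : ℕ) : ℝ) ≠ 0 := Nat.cast_ne_zero.mpr hb
        rw [div_mul_div_comm, mul_comm ((f B l : ℕ) : ℝ) ((f (A ∩ B) l : ℕ) : ℝ),
          mul_div_mul_right _ _ hb']
    rw [nap4b (A ∩ B), nap4b B, hfun]
    rw [show (fun l => φ B l * ((f (A ∩ B) l : ℝ) / (f B l : ℝ)))
      = φ B * (fun l => (f (A ∩ B) l : ℝ) / (f B l : ℝ)) from rfl, map_mul]
end

section
/- In the de Finetti lottery on the positive integers, the Asymptotic Limit Property holds: if A is a set of positive integers having asymptotic density L, i.e. |A ∩ {1,…,n}|/n → L as n → ∞, then P(A) is infinitely close to L, i.e. for every real ε > 0 one has |P(A) − ι(L)| < ι(ε) in R. -/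
/-- The initial segment `{1, …, n}` of the positive integers, as a nonempty finite set. -/
def initSeg (n : ℕ+) : FinP ℕ+ :=
  ⟨Finset.Icc 1 n, Finset.nonempty_Icc.mpr n.one_le⟩

lemma iota_nonneg {R} [Field R] [LinearOrder R] [IsStrictOrderedRing R] (ι : ℝ →+* R) {x : ℝ} (hx : 0 ≤ x) : 0 ≤ ι x := by
  have : ι x = ι (Real.sqrt x) * ι (Real.sqrt x) := by
    rw [← map_mul, Real.mul_self_sqrt hx]
  rw [this]; exact mul_self_nonneg _

lemma iota_pos {R} [Field R] [LinearOrder R] [IsStrictOrderedRing R] (ι : ℝ →+* R) {x : ℝ} (hx : 0 < x) : 0 < ι x := by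
  rcases (iota_nonneg ι hx.le).lt_or_eq with h | h
  · exact h
  · exfalso
    have : ι x * ι x⁻¹ = 1 := by rw [← map_mul, mul_inv_cancel₀ hx.ne', map_one]
    rw [← h, zero_mul] at this
    exact one_ne_zero this.symm

lemma initSeg_injective : Function.Injective initSeg := by
  intro m n h
  have h' : Finset.Icc (1:ℕ+) m = Finset.Icc 1 n := congrArg Subtype.val h
  have hm : m ∈ Finset.Icc (1:ℕ+) n := h' ▸ Finset.mem_Icc.mpr ⟨m.one_le, le_refl m⟩
  have hn : n ∈ Finset.Icc (1:ℕ+) m := h' ▸ Finset.mem_Icc.mpr ⟨n.one_le, le_refl n⟩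
  exact le_antisymm (Finset.mem_Icc.mp hm).2 (Finset.mem_Icc.mp hn).2

/-- In the de Finetti lottery on the positive integers, the Asymptotic
Limit Property holds: if `A` has asymptotic density `L`, then `P(A)` is infinitely
close to `ι(L)`.  Here `P(A) = J(λ ↦ |A ∩ λ|/|λ|)`, and `J` annihilates functions
vanishing eventually along the chain `(λₙ)` and is monotone along it. -/
theorem deFinetti_asymptotic_limit_property
    {R : Type*} [Field R] [LinearOrder R] [IsStrictOrderedRing R] (ι : ℝ →+* R)
    (J : (FinP ℕ+ → ℝ) →+* R)
    (hJconst : ∀ r : ℝ, J (fun _ => r) = ι r)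
    (hann : ∀ φ : FinP ℕ+ → ℝ,
      (∃ N : ℕ+, ∀ n : ℕ+, N ≤ n → φ (initSeg n) = 0) → J φ = 0)
    (hpos : ∀ φ : FinP ℕ+ → ℝ, (∀ n : ℕ+, 0 ≤ φ (initSeg n)) → 0 ≤ J φ)
    (A : Set ℕ+) (L : ℝ)
    (hL : Filter.Tendsto
      (fun n : ℕ+ =>
        (∑ ω ∈ Finset.Icc 1 n, Set.indicator A (fun _ => (1 : ℝ)) ω) / ((n : ℕ) : ℝ))
      Filter.atTop (nhds L)) :
    ∀ ε : ℝ, 0 < ε →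
      |J (fun l : FinP ℕ+ =>
          (∑ ω ∈ l.1, Set.indicator A (fun _ => (1 : ℝ)) ω) / (l.1.card : ℝ)) - ι L|
        < ι ε := by
  classical
  intro ε hε
  set φ : FinP ℕ+ → ℝ := fun l =>
    (∑ ω ∈ l.1, Set.indicator A (fun _ => (1 : ℝ)) ω) / (l.1.card : ℝ) with hφdef
  -- the value of φ on initial segments is the sequence in hL
  have hcard : ∀ n : ℕ+, ((initSeg n).1.card : ℝ) = ((n : ℕ) : ℝ) := by
    intro n
    have : (Finset.Icc (1:ℕ+) n).card = n + 1 - 1 := PNat.card_Icc 1 n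
    simp [initSeg, this]
  have hφseg : ∀ n : ℕ+, φ (initSeg n) =
      (∑ ω ∈ Finset.Icc 1 n, Set.indicator A (fun _ => (1 : ℝ)) ω) / ((n : ℕ) : ℝ) := by
    intro n; rw [hφdef]; simp only [initSeg]; rw [← hcard n]; rfl
  -- get N from convergence
  obtain ⟨N, hN⟩ := (Metric.tendsto_atTop.mp hL) (ε / 2) (by positivity)
  -- modified function
  set φ' : FinP ℕ+ → ℝ := fun l =>
    if ∃ m : ℕ+, m < N ∧ l = initSeg m then L else φ l with hφ'def
  have hφ'seg : ∀ n : ℕ+, N ≤ n → φ' (initSeg n) = φ (initSeg n) := by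
    intro n hn
    rw [hφ'def]
    simp only
    rw [if_neg]
    rintro ⟨m, hm, heq⟩
    exact absurd (initSeg_injective heq.symm) (by rintro rfl; exact absurd hn (not_le.mpr hm))
  have hbound : ∀ n : ℕ+, |φ' (initSeg n) - L| ≤ ε / 2 := by
    intro n
    rcases le_or_gt N n with h | h
    · rw [hφ'seg n h, hφseg n]
      exact le_of_lt (by simpa [Real.dist_eq] using hN n h)
    · rw [hφ'def]
      simp only
      rw [if_pos ⟨n, h, rfl⟩]
      simp [le_of_lt (half_pos hε)]
  -- J φ' = J φ
  have hJeq : J φ' = J φ := by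
    have : J (φ' - φ) = 0 := by
      apply hann
      exact ⟨N, fun n hn => by simp [Pi.sub_apply, hφ'seg n hn]⟩
    have h2 : J φ' = J (φ' - φ) + J φ := by rw [← map_add]; ring_nf
    rw [h2, this, zero_add]
  -- upper bound
  have hub : J φ' ≤ ι (L + ε / 2) := by
    have h0 : 0 ≤ J (fun l => (L + ε / 2) - φ' l) := by
      apply hpos
      intro n
      have := hbound n
      have := abs_le.mp this
      linarith [this.2]
    have heq : J (fun l => (L + ε / 2) - φ' l) = ι (L + ε / 2) - J φ' := by
      have : (fun l => (L + ε / 2) - φ' l) = (fun _ => (L + ε / 2)) - φ' := rfl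
      rw [this, map_sub, hJconst]
    linarith [heq ▸ h0]
  -- lower bound
  have hlb : ι (L - ε / 2) ≤ J φ' := by
    have h0 : 0 ≤ J (fun l => φ' l - (L - ε / 2)) := by
      apply hpos
      intro n
      have := abs_le.mp (hbound n)
      linarith [this.1]
    have heq : J (fun l => φ' l - (L - ε / 2)) = J φ' - ι (L - ε / 2) := by
      have : (fun l => φ' l - (L - ε / 2)) = φ' - (fun _ => (L - ε / 2)) := rfl
      rw [this, map_sub, hJconst]
    linarith [heq ▸ h0]
  -- conclude
  have hhalf : ι (ε / 2) < ι ε := by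
    have : ι ε - ι (ε / 2) = ι (ε / 2) := by rw [← map_sub]; ring_nf
    have hp : 0 < ι (ε / 2) := iota_pos ι (half_pos hε)
    linarith
  have h1 : ι (L + ε / 2) = ι L + ι (ε / 2) := by rw [map_add]
  have h2 : ι (L - ε / 2) = ι L - ι (ε / 2) := by rw [map_sub]
  rw [← hJeq, abs_sub_lt_iff]
  constructor
  · calc J φ' - ι L ≤ ι (ε / 2) := by rw [h1] at hub; linarith
    _ < ι ε := hhalf
  · calc ι L - J φ' ≤ ι (ε / 2) := by rw [h2] at hlb; linarith
    _ < ι ε := hhalf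
end

section
/- Consider the de Finetti lottery on the positive integers produced by the family Λ = {λ_{m!} : m ∈ ℕ}, where λ_N = {1,…,N}. Then for every integer k ≥ 1 and every residue r, the arithmetic progression A = {j ≥ 1 : j ≡ r (mod k)} satisfies P(A) = ι(1/k). In particular each of the sets ℕ_{k,l} = {nk − l : n ≥ 1} (0 ≤ l ≤ k−1) has probability 1/k, and the even and the odd numbers each have probability 1/2. -/
lemma eq_of_mod_eq (k a b : ℕ) (h : a % k = b % k) (h1 : a ≤ b) (h2 : b < a + k) : a = b := by
  have hd : k ∣ b - a := (Nat.modEq_iff_dvd' h1).mp h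
  have : b - a = 0 := Nat.eq_zero_of_dvd_of_lt hd (by omega)
  omega

lemma count_mod (k r : ℕ) (hk : 1 ≤ k) : ∀ n : ℕ,
    ((Finset.Ioc 0 (k*n)).filter (fun x => x % k = r % k)).card = n := by
  intro n
  induction n with
  | zero => simp
  | succ n ih =>
    have hmul : k*(n+1) = k*n + k := by ring
    have hsplit : Finset.Ioc 0 (k*(n+1)) = Finset.Ioc 0 (k*n) ∪ Finset.Ioc (k*n) (k*(n+1)) :=
      (Finset.Ioc_union_Ioc_eq_Ioc (Nat.zero_le _) (by omega)).symm
    have hdisj : Disjoint ((Finset.Ioc 0 (k*n)).filter (fun x => x % k = r % k))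
        ((Finset.Ioc (k*n) (k*(n+1))).filter (fun x => x % k = r % k)) := by
      apply Finset.disjoint_filter_filter
      rw [Finset.disjoint_left]
      intro a ha hb
      simp only [Finset.mem_Ioc] at ha hb
      omega
    set r' := r % k with hr'
    have hr : r' < k := Nat.mod_lt _ hk
    set y := k*n + (if r' = 0 then k else r') with hy
    have hy1 : k*n < y ∧ y ≤ k*n + k := by rw [hy]; split_ifs with h <;> omega
    have hy2 : y % k = r' := by
      rw [hy]; split_ifs with h
      · rw [h, ← Nat.mul_succ, Nat.mul_mod_right]
      · rw [Nat.mul_add_mod, Nat.mod_eq_of_lt hr]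
    have hone : ((Finset.Ioc (k*n) (k*(n+1))).filter (fun x => x % k = r % k)) = {y} := by
      ext x
      simp only [Finset.mem_filter, Finset.mem_Ioc, Finset.mem_singleton, hmul]
      constructor
      · rintro ⟨⟨h1, h2⟩, h3⟩
        rcases le_total x y with hle | hle
        · exact eq_of_mod_eq k x y ((h3.trans hr'.symm).trans hy2.symm) hle (by omega)
        · exact (eq_of_mod_eq k y x (hy2.trans (h3.trans hr'.symm).symm) hle (by omega)).symm
      · rintro rfl
        exact ⟨⟨hy1.1, hy1.2⟩, hy2.trans hr'⟩
    rw [hsplit, Finset.filter_union, Finset.card_union_of_disjoint hdisj, ih, hone]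
    simp

lemma card_pnat_filter (N : ℕ+) (k r : ℕ) :
    ((Finset.Icc (1:ℕ+) N).filter (fun ω : ℕ+ => (ω:ℕ) % k = r % k)).card
      = ((Finset.Ioc 0 (N:ℕ)).filter (fun x => x % k = r % k)).card := by
  refine Finset.card_bij (fun (ω : ℕ+) _ => (ω:ℕ)) ?_ ?_ ?_
  · intro a ha
    simp only [Finset.mem_filter, Finset.mem_Icc, Finset.mem_Ioc] at ha ⊢
    exact ⟨⟨a.pos, ha.1.2⟩, ha.2⟩
  · intro a _ b _ h
    exact PNat.coe_injective h
  · intro b hb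
    simp only [Finset.mem_filter, Finset.mem_Ioc] at hb
    refine ⟨⟨b, hb.1.1⟩, ?_, rfl⟩
    exact Finset.mem_filter.mpr ⟨Finset.mem_Icc.mpr ⟨PNat.one_le _, by exact_mod_cast hb.1.2⟩, hb.2⟩

/-- In the de Finetti lottery on the positive integers produced by the
family `Λ = {λ_{m!}}`, every arithmetic progression `{j ≥ 1 : j ≡ r (mod k)}` has
probability exactly `1/k`.  Here `P(A) = J(λ ↦ |A ∩ λ|/|λ|)` and `J` annihilates
functions vanishing eventually along `(λ_{m!})`. -/
theorem deFinetti_arithmetic_progression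
    {R : Type*} [Field R] (ι : ℝ →+* R)
    (J : (FinP ℕ+ → ℝ) →+* R)
    (hJconst : ∀ r : ℝ, J (fun _ => r) = ι r)
    (hann : ∀ φ : FinP ℕ+ → ℝ,
      (∃ M : ℕ, ∀ m : ℕ, M ≤ m →
        φ (initSeg ⟨m.factorial, m.factorial_pos⟩) = 0) → J φ = 0)
    (k : ℕ) (hk : 1 ≤ k) (r : ℕ) :
    J (fun l : FinP ℕ+ =>
        (∑ ω ∈ l.1, Set.indicator {j : ℕ+ | (j : ℕ) ≡ r [MOD k]}
            (fun _ => (1 : ℝ)) ω) / (l.1.card : ℝ))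
      = ι (1 / (k : ℝ)) := by
  classical
  set φ : FinP ℕ+ → ℝ := fun l : FinP ℕ+ =>
      (∑ ω ∈ l.1, Set.indicator {j : ℕ+ | (j : ℕ) ≡ r [MOD k]}
          (fun _ => (1 : ℝ)) ω) / (l.1.card : ℝ) with hφ
  have hval : ∀ m : ℕ, k ≤ m → φ (initSeg ⟨m.factorial, m.factorial_pos⟩) = 1 / (k : ℝ) := by
    intro m hm
    set N : ℕ+ := ⟨m.factorial, m.factorial_pos⟩ with hN
    obtain ⟨n, hn⟩ : k ∣ m.factorial := Nat.dvd_factorial (by omega) hm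
    have hNn : (N : ℕ) = k * n := hn
    have hnpos : 0 < n := by
      have h2 : 0 < k * n := by rw [← hn]; exact m.factorial_pos
      exact Nat.pos_of_ne_zero fun h => by simp [h] at h2
    have hsum : (∑ ω ∈ (initSeg N).1, Set.indicator {j : ℕ+ | (j : ℕ) ≡ r [MOD k]}
        (fun _ => (1 : ℝ)) ω)
        = (((Finset.Icc (1:ℕ+) N).filter (fun ω : ℕ+ => (ω:ℕ) % k = r % k)).card : ℝ) := by
      rw [show (initSeg N).1 = Finset.Icc (1:ℕ+) N from rfl]
      rw [← Finset.sum_boole]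
      refine Finset.sum_congr rfl fun ω _ => ?_
      rw [Set.indicator_apply]
      simp only [Set.mem_setOf_eq, Nat.ModEq]
    have hcard : ((initSeg N).1.card : ℕ) = (N : ℕ) := by
      show (Finset.Icc (1:ℕ+) N).card = (N : ℕ)
      rw [PNat.card_Icc]
      simp
    have hcount : ((Finset.Icc (1:ℕ+) N).filter (fun ω : ℕ+ => (ω:ℕ) % k = r % k)).card = n := by
      rw [card_pnat_filter, hNn, count_mod k r hk n]
    rw [hφ]
    simp only
    rw [hsum, hcount, hcard, hNn]
    have hk0 : (k : ℝ) ≠ 0 := by positivity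
    have hn0 : (n : ℝ) ≠ 0 := by positivity
    push_cast
    field_simp
  have hzero : J (fun l => φ l - 1 / (k : ℝ)) = 0 := by
    apply hann
    exact ⟨k, fun m hm => by rw [hval m hm]; ring⟩
  have hdecomp : J φ = J (fun l => φ l - 1 / (k : ℝ)) + J (fun _ => 1 / (k : ℝ)) := by
    rw [← map_add]
    congr 1
    funext l
    simp only [Pi.add_apply]
    ring
  calc J φ = _ := hdecomp
    _ = ι (1 / (k : ℝ)) := by rw [hzero, zero_add, hJconst]
end

section
/- Consider the fair lottery on ℚ produced by the family Λ_ℚ = {μ_{m!} : m ∈ ℕ}, where μₙ = {p/n : p ∈ ℤ, |p/n| ≤ n} is a finite set of rationals. Then the numerosity of rational intervals is proportional to their length: for all rationals a ≤ b, J(λ ↦ |[a,b)_ℚ ∩ λ|) = ι(b − a) · J(λ ↦ |[0,1)_ℚ ∩ λ|), where [a,b)_ℚ = {q ∈ ℚ : a ≤ q < b} and |[a,b)_ℚ ∩ λ| denotes the cardinality of [a,b)_ℚ ∩ λ viewed as a real number. -/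
/-- The finite set `μₙ = {p/n : p ∈ ℤ, |p| ≤ n²} ⊆ ℚ`. -/
noncomputable def muQ (n : ℕ) : Finset ℚ :=
  (Finset.Icc (-(n : ℤ) ^ 2) ((n : ℤ) ^ 2)).image fun p : ℤ => (p : ℚ) / (n : ℚ)

lemma muQ_nonempty (n : ℕ) : (muQ n).Nonempty :=
  Finset.Nonempty.image
    (Finset.nonempty_Icc.mpr (neg_le_self (by positivity : (0:ℤ) ≤ (n:ℤ)^2))) _

/-- `μₙ` as a nonempty finite subset of `ℚ`. -/
noncomputable def muQP (n : ℕ) : FinP ℚ := ⟨muQ n, muQ_nonempty n⟩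


lemma count_interval (a b : ℚ) (hab : a ≤ b) (n : ℕ) (hn : 0 < n)
    (A B : ℤ) (hA : (A : ℚ) = a * n) (hB : (B : ℚ) = b * n)
    (ha : |a| ≤ n) (hb : |b| ≤ n) :
    ∑ q ∈ muQ n, Set.indicator {q : ℚ | a ≤ q ∧ q < b} (fun _ => (1 : ℝ)) q
      = (n : ℝ) * ((b : ℝ) - (a : ℝ)) := by
  have hnQ : (0 : ℚ) < n := by exact_mod_cast hn
  have hinj : Function.Injective (fun p : ℤ => (p : ℚ) / (n : ℚ)) := by
    intro p q h
    simp only [div_eq_div_iff hnQ.ne' hnQ.ne'] at h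
    exact_mod_cast mul_right_cancel₀ hnQ.ne' h
  have hsum : ∑ q ∈ muQ n, Set.indicator {q : ℚ | a ≤ q ∧ q < b} (fun _ => (1 : ℝ)) q
      = ((muQ n).filter (fun q => a ≤ q ∧ q < b)).card := by
    rw [Finset.sum_indicator_eq_sum_filter]
    simp [Set.mem_setOf_eq]
  rw [hsum]
  have hfilter : (muQ n).filter (fun q => a ≤ q ∧ q < b)
      = (Finset.Ico A B).image (fun p : ℤ => (p : ℚ) / (n : ℚ)) := by
    unfold muQ
    rw [Finset.filter_image]
    congr 1
    ext p
    simp only [Finset.mem_filter, Finset.mem_Icc, Finset.mem_Ico]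
    have h1 : a ≤ (p : ℚ) / n ↔ A ≤ p := by
      rw [le_div_iff₀ hnQ, ← hA]; exact_mod_cast Iff.rfl
    have h2 : (p : ℚ) / n < b ↔ p < B := by
      rw [div_lt_iff₀ hnQ, ← hB]; exact_mod_cast Iff.rfl
    have hAlb : -(n : ℤ) ^ 2 ≤ A := by
      have : (-(n:ℚ)^2 : ℚ) ≤ a * n := by
        have : -(n:ℚ) ≤ a := (abs_le.mp ha).1
        nlinarith
      rw [← hA] at this; exact_mod_cast this
    have hBub : B ≤ (n : ℤ) ^ 2 := by
      have : b * n ≤ (n:ℚ)^2 := by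
        have : b ≤ (n:ℚ) := (abs_le.mp hb).2
        nlinarith
      rw [← hB] at this; exact_mod_cast this
    constructor
    · rintro ⟨_, h⟩; exact ⟨h1.mp h.1, h2.mp h.2⟩
    · rintro ⟨hl, hr⟩
      exact ⟨⟨le_trans hAlb hl, le_of_lt (lt_of_lt_of_le hr hBub)⟩, h1.mpr hl, h2.mpr hr⟩
  rw [hfilter, Finset.card_image_of_injective _ hinj, Int.card_Ico]
  have hAB : A ≤ B := by
    have : (A : ℚ) ≤ B := by rw [hA, hB]; nlinarith
    exact_mod_cast this
  have h0 : ((B - A).toNat : ℤ) = B - A := Int.toNat_of_nonneg (by omega)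
  have : ((B - A).toNat : ℝ) = (B : ℝ) - A := by exact_mod_cast congrArg (Int.cast : ℤ → ℝ) h0
  rw [this]
  have hA' : (A : ℝ) = (a : ℝ) * n := by exact_mod_cast congrArg (Rat.cast : ℚ → ℝ) hA
  have hB' : (B : ℝ) = (b : ℝ) * n := by exact_mod_cast congrArg (Rat.cast : ℚ → ℝ) hB
  rw [hA', hB']; ring


lemma exists_int_of_den_dvd (q : ℚ) (n : ℕ) (h : q.den ∣ n) :
    ∃ A : ℤ, (A : ℚ) = q * n := by
  obtain ⟨k, hk⟩ := h
  refine ⟨q.num * k, ?_⟩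
  have h1 : q * (q.den : ℚ) = q.num := Rat.mul_den_eq_num q
  rw [hk]
  push_cast
  rw [← mul_assoc, h1]

/-- In the fair lottery on `ℚ` produced by the family `Λ_ℚ = {μ_{m!}}`,
the numerosity of rational intervals is proportional to their length:
`J(λ ↦ |[a,b)_ℚ ∩ λ|) = ι(b − a) · J(λ ↦ |[0,1)_ℚ ∩ λ|)`.  Here `J` annihilates
functions vanishing eventually along `(μ_{m!})`. -/
theorem lotteryQ_interval_numerosity
    {R : Type*} [Field R] (ι : ℝ →+* R)
    (J : (FinP ℚ → ℝ) →+* R)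
    (hJconst : ∀ r : ℝ, J (fun _ => r) = ι r)
    (hann : ∀ φ : FinP ℚ → ℝ,
      (∃ M : ℕ, ∀ m : ℕ, M ≤ m → φ (muQP (m.factorial)) = 0) → J φ = 0)
    (a b : ℚ) (hab : a ≤ b) :
    J (fun l : FinP ℚ =>
        ∑ q ∈ l.1, Set.indicator {q : ℚ | a ≤ q ∧ q < b} (fun _ => (1 : ℝ)) q)
      = ι ((b : ℝ) - (a : ℝ)) *
        J (fun l : FinP ℚ =>
          ∑ q ∈ l.1, Set.indicator {q : ℚ | 0 ≤ q ∧ q < 1} (fun _ => (1 : ℝ)) q) := by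
  set f := fun l : FinP ℚ =>
      ∑ q ∈ l.1, Set.indicator {q : ℚ | a ≤ q ∧ q < b} (fun _ => (1 : ℝ)) q with hf
  set g := fun l : FinP ℚ =>
      ∑ q ∈ l.1, Set.indicator {q : ℚ | 0 ≤ q ∧ q < 1} (fun _ => (1 : ℝ)) q with hg
  set c : ℝ := (b : ℝ) - (a : ℝ) with hc
  have key : J (fun l => f l - c * g l) = 0 := by
    apply hann
    refine ⟨max (max a.den b.den) (max ⌈|a|⌉₊ (max ⌈|b|⌉₊ 1)), fun m hm => ?_⟩
    set n := m.factorial with hn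
    have hmn : m ≤ n := Nat.self_le_factorial m
    have hnpos : 0 < n := Nat.factorial_pos m
    have hda : a.den ∣ n := Nat.dvd_factorial a.pos
      (le_trans (le_trans (le_max_left _ _) (le_max_left _ _)) hm)
    have hdb : b.den ∣ n := Nat.dvd_factorial b.pos
      (le_trans (le_trans (le_max_right _ _) (le_max_left _ _)) hm)
    have ha : |a| ≤ (n : ℚ) := by
      calc |a| ≤ (⌈|a|⌉₊ : ℚ) := Nat.le_ceil _
        _ ≤ (n : ℚ) := by
          exact_mod_cast le_trans (le_trans (le_max_left _ _) (le_max_right _ _))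
            (le_trans hm hmn)
    have hb : |b| ≤ (n : ℚ) := by
      calc |b| ≤ (⌈|b|⌉₊ : ℚ) := Nat.le_ceil _
        _ ≤ (n : ℚ) := by
          exact_mod_cast le_trans (le_trans (le_trans (le_max_left _ _) (le_max_right _ _))
            (le_max_right _ _)) (le_trans hm hmn)
    obtain ⟨A, hA⟩ := exists_int_of_den_dvd a n hda
    obtain ⟨B, hB⟩ := exists_int_of_den_dvd b n hdb
    have hfval : f (muQP n) = (n : ℝ) * ((b : ℝ) - (a : ℝ)) :=
      count_interval a b hab n hnpos A B hA hB ha hb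
    have hgval : g (muQP n) = (n : ℝ) * ((1 : ℝ) - (0 : ℝ)) := by
      have := count_interval 0 1 zero_le_one n hnpos 0 n (by push_cast; ring)
        (by push_cast; ring)
        (by simpa using (by exact_mod_cast hnpos.le : (0:ℚ) ≤ n))
        (by rw [abs_one]; exact_mod_cast hnpos)
      simpa [hg, muQP] using this
    rw [hfval, hgval, hc]
    ring
  have hsplit : (fun l => f l - c * g l) = f - (fun _ : FinP ℚ => c) * g := rfl
  rw [hsplit, map_sub, map_mul, hJconst] at key
  have := sub_eq_zero.mp key
  rw [this, hc]
end

section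
/- Let n ≥ 1 be a natural number, let θ be a finite set of irrational numbers lying in the interval [0,1], and let μ_{n,θ} = μₙ ∪ {(p + a)/n : p ∈ ℤ, −n² ≤ p ≤ n² − 1, a ∈ θ}, where μₙ = {p/n : p ∈ ℤ, |p| ≤ n²}. Then for all real numbers x ≤ y with −n ≤ x and y ≤ n, the number of elements of μ_{n,θ} in the interval [x, y) satisfies (n(y − x) − 1)(|θ| + 1) ≤ |[x,y) ∩ μ_{n,θ}| ≤ (n(y − x) + 2)(|θ| + 1). -/
/-- The finite set `μₙ = {p/n : p ∈ ℤ, |p| ≤ n²} ⊆ ℝ`. -/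
noncomputable def muR (n : ℕ) : Finset ℝ :=
  (Finset.Icc (-(n : ℤ) ^ 2) ((n : ℤ) ^ 2)).image fun p : ℤ => (p : ℝ) / (n : ℝ)

/-- The finite set `μ_{n,θ} = μₙ ∪ {(p + a)/n : p ∈ ℤ, −n² ≤ p ≤ n² − 1, a ∈ θ} ⊆ ℝ`. -/
noncomputable def muRtheta (n : ℕ) (θ : Finset ℝ) : Finset ℝ :=
  muR n ∪
    ((Finset.Icc (-(n : ℤ) ^ 2) ((n : ℤ) ^ 2 - 1)) ×ˢ θ).image
      fun pa : ℤ × ℝ => ((pa.1 : ℝ) + pa.2) / (n : ℝ)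

private lemma count_bounds (c d : ℝ) (h : c ≤ d) :
    d - c - 1 ≤ ((Finset.Icc ⌈c⌉ (⌈d⌉ - 1)).card : ℝ) ∧
    ((Finset.Icc ⌈c⌉ (⌈d⌉ - 1)).card : ℝ) ≤ d - c + 1 := by
  have h1 : ⌈c⌉ ≤ ⌈d⌉ := Int.ceil_le_ceil h
  have hcard : (Finset.Icc ⌈c⌉ (⌈d⌉ - 1)).card = (⌈d⌉ - ⌈c⌉).toNat := by
    rw [Int.card_Icc]; congr 1; omega
  have hc2 : (((⌈d⌉ - ⌈c⌉).toNat : ℕ) : ℝ) = ((⌈d⌉ : ℤ) : ℝ) - ((⌈c⌉ : ℤ) : ℝ) := by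
    have h0 : (0 : ℤ) ≤ ⌈d⌉ - ⌈c⌉ := by omega
    rw [show (((⌈d⌉ - ⌈c⌉).toNat : ℕ) : ℝ) = (((⌈d⌉ - ⌈c⌉).toNat : ℤ) : ℝ) by push_cast; ring,
      Int.toNat_of_nonneg h0]
    push_cast; ring
  have h3 : c ≤ ((⌈c⌉ : ℤ) : ℝ) := Int.le_ceil c
  have h4 : ((⌈c⌉ : ℤ) : ℝ) < c + 1 := Int.ceil_lt_add_one c
  have h5 : d ≤ ((⌈d⌉ : ℤ) : ℝ) := Int.le_ceil d
  have h6 : ((⌈d⌉ : ℤ) : ℝ) < d + 1 := Int.ceil_lt_add_one d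
  rw [hcard, hc2]
  constructor <;> linarith

private lemma filter_eq_Icc (n : ℕ) (hn : 1 ≤ n) (a x y : ℝ) (lo hi : ℤ)
    (hlo : (lo : ℝ) - 1 < (n : ℝ) * x - a) (hhi : (n : ℝ) * y - a ≤ (hi : ℝ) + 1) :
    ((Finset.Icc lo hi).filter fun p : ℤ =>
        x ≤ ((p : ℝ) + a) / (n : ℝ) ∧ ((p : ℝ) + a) / (n : ℝ) < y)
      = Finset.Icc ⌈(n : ℝ) * x - a⌉ (⌈(n : ℝ) * y - a⌉ - 1) := by
  have hN : (0 : ℝ) < (n : ℝ) := by exact_mod_cast Nat.lt_of_lt_of_le Nat.zero_lt_one hn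
  ext p
  simp only [Finset.mem_filter, Finset.mem_Icc]
  constructor
  · rintro ⟨⟨_, _⟩, h1, h2⟩
    have h1' : (n : ℝ) * x - a ≤ (p : ℝ) := by
      rw [le_div_iff₀ hN] at h1; linarith
    have h2' : (p : ℝ) < (n : ℝ) * y - a := by
      rw [div_lt_iff₀ hN] at h2; linarith
    exact ⟨Int.ceil_le.mpr h1', by have := Int.lt_ceil.mpr h2'; omega⟩
  · rintro ⟨h1, h2⟩
    have h1' : (n : ℝ) * x - a ≤ (p : ℝ) := le_trans (Int.le_ceil _) (by exact_mod_cast h1)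
    have h2' : (p : ℝ) < (n : ℝ) * y - a := by
      have : p < ⌈(n : ℝ) * y - a⌉ := by omega
      exact Int.lt_ceil.mp this
    have hploR : ((lo : ℤ) : ℝ) - 1 < (p : ℝ) := lt_of_lt_of_le hlo h1'
    have hplo : lo - 1 < p := by exact_mod_cast (by push_cast; linarith : ((lo - 1 : ℤ) : ℝ) < (p : ℝ))
    have hphiR : (p : ℝ) < ((hi : ℤ) : ℝ) + 1 := lt_of_lt_of_le h2' hhi
    have hphi : p < hi + 1 := by exact_mod_cast (by push_cast; linarith : ((p : ℝ)) < ((hi + 1 : ℤ) : ℝ))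
    refine ⟨⟨by omega, by omega⟩, ?_, ?_⟩
    · rw [le_div_iff₀ hN]; linarith
    · rw [div_lt_iff₀ hN]; linarith

/-- counting estimate for the fair lottery on `ℝ`: for `n ≥ 1`, `θ` a
finite set of irrationals in `[0,1]`, and reals `x ≤ y` with `−n ≤ x` and `y ≤ n`,
the number of points of `μ_{n,θ}` in `[x, y)` is between `(n(y−x) − 1)(|θ| + 1)` and
`(n(y−x) + 2)(|θ| + 1)`. -/
theorem muRtheta_interval_count
    (n : ℕ) (hn : 1 ≤ n) (θ : Finset ℝ)
    (hθ : ∀ a ∈ θ, Irrational a ∧ a ∈ Set.Icc (0 : ℝ) 1)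
    (x y : ℝ) (hxy : x ≤ y) (hx : -(n : ℝ) ≤ x) (hy : y ≤ (n : ℝ)) :
    ((n : ℝ) * (y - x) - 1) * ((θ.card : ℝ) + 1)
        ≤ (((muRtheta n θ).filter fun t => x ≤ t ∧ t < y).card : ℝ) ∧
    (((muRtheta n θ).filter fun t => x ≤ t ∧ t < y).card : ℝ)
        ≤ ((n : ℝ) * (y - x) + 2) * ((θ.card : ℝ) + 1) := by
  classical
  have hN : (0 : ℝ) < (n : ℝ) := by exact_mod_cast Nat.lt_of_lt_of_le Nat.zero_lt_one hn
  have hNne : (n : ℝ) ≠ 0 := ne_of_gt hN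
  -- facts about elements of θ
  have hθ' : ∀ a ∈ θ, 0 < a ∧ a < 1 := by
    intro a ha
    obtain ⟨hirr, h0, h1⟩ := hθ a ha
    constructor
    · rcases lt_or_eq_of_le h0 with h | h
      · exact h
      · exact absurd (h ▸ hirr) (by simpa using Rat.not_irrational 0)
    · rcases lt_or_eq_of_le h1 with h | h
      · exact h
      · exact absurd (h ▸ hirr) (by simpa using Rat.not_irrational 1)
  set P : ℝ → Prop := fun t => x ≤ t ∧ t < y with hP
  set R1 := Finset.Icc (-(n : ℤ) ^ 2) ((n : ℤ) ^ 2) with hR1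
  set R2 := Finset.Icc (-(n : ℤ) ^ 2) ((n : ℤ) ^ 2 - 1) with hR2
  -- rewrite the second part as a biUnion
  have hsplit : muRtheta n θ
      = muR n ∪ θ.biUnion fun a => R2.image fun p : ℤ => ((p : ℝ) + a) / (n : ℝ) := by
    unfold muRtheta
    congr 1
    ext t
    simp only [Finset.mem_image, Finset.mem_product, Finset.mem_biUnion, hR2]
    constructor
    · rintro ⟨⟨p, a⟩, ⟨hp, ha⟩, rfl⟩; exact ⟨a, ha, p, hp, rfl⟩
    · rintro ⟨a, ha, p, hp, rfl⟩; exact ⟨⟨p, a⟩, ⟨hp, ha⟩, rfl⟩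
  -- rationality facts for disjointness
  have hrat : ∀ p : ℤ, ¬ Irrational ((p : ℝ) / (n : ℝ)) := by
    intro p
    rw [show ((p : ℝ) / (n : ℝ)) = (((p : ℚ) / (n : ℚ) : ℚ) : ℝ) by push_cast; ring]
    exact Rat.not_irrational _
  have hirr : ∀ a ∈ θ, ∀ p : ℤ, Irrational (((p : ℝ) + a) / (n : ℝ)) := by
    intro a ha p
    exact ((hθ a ha).1.intCast_add p).div_natCast (by omega)
  -- injectivity of the affine maps
  have hinj : ∀ a : ℝ, Function.Injective fun p : ℤ => ((p : ℝ) + a) / (n : ℝ) := by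
    intro a p q h
    simp only [div_left_inj' hNne, add_left_inj] at h
    exact_mod_cast h
  have hinj0 : Function.Injective fun p : ℤ => (p : ℝ) / (n : ℝ) := by
    intro p q h
    simp only [div_left_inj' hNne] at h
    exact_mod_cast h
  -- count in each class
  have hC0 : ((muR n).filter P).card
      = (Finset.Icc ⌈(n : ℝ) * x - 0⌉ (⌈(n : ℝ) * y - 0⌉ - 1)).card := by
    unfold muR
    rw [Finset.filter_image]
    rw [Finset.card_image_of_injective _ hinj0]
    have e : (Finset.Icc (-(n : ℤ) ^ 2) ((n : ℤ) ^ 2)).filter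
          (fun p : ℤ => P ((p : ℝ) / (n : ℝ)))
        = Finset.Icc ⌈(n : ℝ) * x - 0⌉ (⌈(n : ℝ) * y - 0⌉ - 1) := by
      rw [← filter_eq_Icc n hn 0 x y (-(n : ℤ) ^ 2) ((n : ℤ) ^ 2)
        (by push_cast; nlinarith) (by push_cast; nlinarith)]
      exact Finset.filter_congr fun p _ => by simp [hP]
    rw [e]
  have hCa : ∀ a ∈ θ, ((R2.image fun p : ℤ => ((p : ℝ) + a) / (n : ℝ)).filter P).card
      = (Finset.Icc ⌈(n : ℝ) * x - a⌉ (⌈(n : ℝ) * y - a⌉ - 1)).card := by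
    intro a ha
    obtain ⟨ha0, ha1⟩ := hθ' a ha
    rw [Finset.filter_image]
    rw [Finset.card_image_of_injective _ (hinj a)]
    have e : R2.filter (fun p : ℤ => P (((p : ℝ) + a) / (n : ℝ)))
        = Finset.Icc ⌈(n : ℝ) * x - a⌉ (⌈(n : ℝ) * y - a⌉ - 1) := by
      rw [hR2, ← filter_eq_Icc n hn a x y (-(n : ℤ) ^ 2) ((n : ℤ) ^ 2 - 1)
        (by push_cast; nlinarith) (by push_cast; nlinarith)]
    rw [e]
  -- disjointness
  have hdisj1 : Disjoint ((muR n).filter P)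
      ((θ.biUnion fun a => R2.image fun p : ℤ => ((p : ℝ) + a) / (n : ℝ)).filter P) := by
    rw [Finset.disjoint_left]
    intro t ht ht'
    rw [Finset.mem_filter] at ht ht'
    obtain ⟨ht, -⟩ := ht
    obtain ⟨ht', -⟩ := ht'
    unfold muR at ht
    rw [Finset.mem_image] at ht
    obtain ⟨p, -, rfl⟩ := ht
    rw [Finset.mem_biUnion] at ht'
    obtain ⟨a, ha, ht'⟩ := ht'
    rw [Finset.mem_image] at ht'
    obtain ⟨q, -, hq⟩ := ht'
    exact hrat p (hq ▸ hirr a ha q)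
  have hdisj2 : ∀ a ∈ θ, ∀ b ∈ θ, a ≠ b →
      Disjoint ((R2.image fun p : ℤ => ((p : ℝ) + a) / (n : ℝ)).filter P)
        ((R2.image fun p : ℤ => ((p : ℝ) + b) / (n : ℝ)).filter P) := by
    intro a ha b hb hab
    rw [Finset.disjoint_left]
    intro t ht ht'
    rw [Finset.mem_filter, Finset.mem_image] at ht ht'
    obtain ⟨⟨p, -, hp⟩, -⟩ := ht
    obtain ⟨⟨q, -, hq⟩, -⟩ := ht'
    have heq : ((p : ℝ) + a) / (n : ℝ) = ((q : ℝ) + b) / (n : ℝ) := by rw [hp, hq]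
    have heq' : (p : ℝ) + a = (q : ℝ) + b := by field_simp at heq; exact heq
    obtain ⟨ha0, ha1⟩ := hθ' a ha
    obtain ⟨hb0, hb1⟩ := hθ' b hb
    have h1 : ((q - p : ℤ) : ℝ) = a - b := by push_cast; linarith
    have h2 : (-1 : ℝ) < ((q - p : ℤ) : ℝ) := by rw [h1]; linarith
    have h3 : ((q - p : ℤ) : ℝ) < 1 := by rw [h1]; linarith
    have h2' : (-1 : ℤ) < q - p := by exact_mod_cast h2
    have h3' : q - p < (1 : ℤ) := by exact_mod_cast h3
    have : q - p = 0 := by omega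
    apply hab
    have : ((q - p : ℤ) : ℝ) = 0 := by rw [this]; norm_num
    linarith [h1 ▸ this]
  -- total count
  have hcard : (((muRtheta n θ).filter P).card : ℝ)
      = ((Finset.Icc ⌈(n : ℝ) * x - 0⌉ (⌈(n : ℝ) * y - 0⌉ - 1)).card : ℝ)
        + ∑ a ∈ θ, ((Finset.Icc ⌈(n : ℝ) * x - a⌉ (⌈(n : ℝ) * y - a⌉ - 1)).card : ℝ) := by
    rw [hsplit, Finset.filter_union, Finset.filter_biUnion,
      Finset.card_union_of_disjoint (by rw [← Finset.filter_biUnion]; exact hdisj1),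
      Finset.card_biUnion hdisj2]
    push_cast
    rw [hC0]
    congr 1
    exact Finset.sum_congr rfl fun a ha => by rw [hCa a ha]
  -- bounds for each term
  have hbnd : ∀ a : ℝ, (n : ℝ) * (y - x) - 1
      ≤ ((Finset.Icc ⌈(n : ℝ) * x - a⌉ (⌈(n : ℝ) * y - a⌉ - 1)).card : ℝ)
      ∧ ((Finset.Icc ⌈(n : ℝ) * x - a⌉ (⌈(n : ℝ) * y - a⌉ - 1)).card : ℝ)
        ≤ (n : ℝ) * (y - x) + 1 := by
    intro a
    have h := count_bounds ((n : ℝ) * x - a) ((n : ℝ) * y - a) (by nlinarith)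
    constructor <;> [linarith [h.1]; linarith [h.2]]
    -- note: (n*y - a) - (n*x - a) = n*(y-x)
  -- sum bounds
  have hsum_lo : (θ.card : ℝ) * ((n : ℝ) * (y - x) - 1)
      ≤ ∑ a ∈ θ, ((Finset.Icc ⌈(n : ℝ) * x - a⌉ (⌈(n : ℝ) * y - a⌉ - 1)).card : ℝ) := by
    calc (θ.card : ℝ) * ((n : ℝ) * (y - x) - 1)
        = ∑ _a ∈ θ, ((n : ℝ) * (y - x) - 1) := by
          rw [Finset.sum_const, nsmul_eq_mul]
      _ ≤ _ := Finset.sum_le_sum fun a _ => (hbnd a).1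
  have hsum_hi : ∑ a ∈ θ, ((Finset.Icc ⌈(n : ℝ) * x - a⌉ (⌈(n : ℝ) * y - a⌉ - 1)).card : ℝ)
      ≤ (θ.card : ℝ) * ((n : ℝ) * (y - x) + 1) := by
    calc ∑ a ∈ θ, ((Finset.Icc ⌈(n : ℝ) * x - a⌉ (⌈(n : ℝ) * y - a⌉ - 1)).card : ℝ)
        ≤ ∑ _a ∈ θ, ((n : ℝ) * (y - x) + 1) := Finset.sum_le_sum fun a _ => (hbnd a).2
      _ = (θ.card : ℝ) * ((n : ℝ) * (y - x) + 1) := by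
          rw [Finset.sum_const, nsmul_eq_mul]
  have hk : (0 : ℝ) ≤ (θ.card : ℝ) := Nat.cast_nonneg _
  have h0lo := (hbnd 0).1
  have h0hi := (hbnd 0).2
  constructor
  · rw [hcard]; nlinarith
  · rw [hcard]; nlinarith
end

section
/- Consider the fair lottery on the space Ω = {H,T}^ℕ of infinite coin-toss sequences produced by the family Λ_CT = {λ_{N,σ}}, where for N ∈ ℕ and a nonempty finite set σ of sequences, λ_{N,σ} = {b⊛c : b ∈ {H,T}^N, c ∈ σ} and b⊛c denotes the sequence beginning with the finite string b followed by the sequence c. Then for every n ∈ ℕ, every injective n-tuple of indices i₁,…,iₙ ∈ ℕ and every n-tuple of values t₁,…,tₙ ∈ {H,T}, the cylindrical set C = {ω ∈ Ω : ω_{i_k} = t_k for k = 1,…,n} satisfies P(C) = ι(2^{−n}). -/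
/-- `λ_{N,σ}`: the finite set of all sequences `b⊛c` obtained from a string
`b ∈ {H,T}^N` (here `Bool^N`) followed by a sequence `c ∈ σ`. -/
noncomputable def lamCT (N : ℕ) (σ : Finset (ℕ → Bool)) : Finset (ℕ → Bool) :=
  letI := Classical.decEq (ℕ → Bool)
  ((Finset.univ : Finset (Fin N → Bool)) ×ˢ σ).image
    fun bc n => if h : n < N then bc.1 ⟨n, h⟩ else bc.2 (n - N)

lemma splice_inj (N : ℕ) : Function.Injective
    (fun (bc : (Fin N → Bool) × (ℕ → Bool)) (n : ℕ) =>
      if h : n < N then bc.1 ⟨n, h⟩ else bc.2 (n - N)) := by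
  rintro ⟨b, c⟩ ⟨b', c'⟩ h
  simp only [Prod.mk.injEq]
  constructor
  · funext m
    have := congrFun h m.val
    simpa [m.isLt] using this
  · funext m
    have := congrFun h (m + N)
    simpa using this

lemma lamCT_card (N : ℕ) (σ : Finset (ℕ → Bool)) :
    (lamCT N σ).card = 2 ^ N * σ.card := by
  classical
  unfold lamCT
  rw [Finset.card_image_of_injective _ (splice_inj N), Finset.card_product,
    Finset.card_univ]
  simp

open Finset in
lemma count_constrained {n N : ℕ} (j : Fin n → Fin N) (hj : Function.Injective j)
    (t : Fin n → Bool) :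
    (Finset.univ.filter (fun b : Fin N → Bool => ∀ k, b (j k) = t k)).card
      = 2 ^ (N - n) := by
  classical
  set S : Fin N → Finset Bool :=
    fun x => Finset.univ.filter (fun v => ∀ k, j k = x → v = t k) with hS
  have hmem : Finset.univ.filter (fun b : Fin N → Bool => ∀ k, b (j k) = t k)
      = Fintype.piFinset S := by
    ext b
    simp only [Finset.mem_filter, Finset.mem_univ, true_and, Fintype.mem_piFinset, hS]
    constructor
    · intro hb x k hk; subst hk; exact hb k
    · intro hb k; exact hb (j k) k rfl
  have hcard : ∀ x : Fin N, (S x).card =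
      if x ∈ Finset.univ.image j then 1 else 2 := by
    intro x
    by_cases hx : x ∈ Finset.univ.image j
    · simp only [hx, if_true]
      obtain ⟨k₀, -, hk₀⟩ := Finset.mem_image.mp hx
      have : S x = {t k₀} := by
        ext v
        simp only [hS, Finset.mem_filter, Finset.mem_univ, true_and,
          Finset.mem_singleton]
        constructor
        · intro hv; exact hv k₀ hk₀
        · intro hv k hk
          have : k = k₀ := hj (by rw [hk, hk₀])
          subst this; exact hv
      simp [this]
    · simp only [hx, if_false]
      have : S x = Finset.univ := by
        ext v
        simp only [hS, Finset.mem_filter, Finset.mem_univ, true_and, iff_true]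
        intro k hk
        exact absurd (Finset.mem_image.mpr ⟨k, Finset.mem_univ k, hk⟩) hx
      simp [this]
  rw [hmem, Fintype.card_piFinset]
  calc (∏ x : Fin N, (S x).card)
      = ∏ x : Fin N, (if x ∈ Finset.univ.image j then 1 else 2) := by
        exact Finset.prod_congr rfl fun x _ => hcard x
    _ = 2 ^ (N - n) := by
        rw [Finset.prod_ite, Finset.prod_const, Finset.prod_const]
        simp only [one_pow, one_mul]
        congr 1
        rw [Finset.filter_not, Finset.filter_mem_eq_inter, Finset.univ_inter,
          Finset.card_sdiff_of_subset (Finset.subset_univ _), Finset.card_univ,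
          Finset.card_image_of_injective _ hj, Finset.card_univ,
          Fintype.card_fin, Fintype.card_fin]

lemma lamCT_filter_card {n : ℕ} (i : Fin n → ℕ) (hi : Function.Injective i)
    (t : Fin n → Bool) (N : ℕ) (hN : ∀ k, i k < N) (σ : Finset (ℕ → Bool)) :
    ((lamCT N σ).filter (fun ω => ∀ k, ω (i k) = t k)).card
      = 2 ^ (N - n) * σ.card := by
  classical
  set j : Fin n → Fin N := fun k => ⟨i k, hN k⟩ with hj
  have hjinj : Function.Injective j := by
    intro a b h
    exact hi (congrArg Fin.val h)
  unfold lamCT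
  rw [Finset.filter_image, Finset.card_image_of_injective _ (splice_inj N)]
  have : (Finset.univ ×ˢ σ).filter
      (fun bc : (Fin N → Bool) × (ℕ → Bool) =>
        ∀ k, (fun m => if h : m < N then bc.1 ⟨m, h⟩ else bc.2 (m - N)) (i k) = t k)
      = (Finset.univ.filter (fun b : Fin N → Bool => ∀ k, b (j k) = t k)) ×ˢ σ := by
    ext ⟨b, c⟩
    simp only [Finset.mem_filter, Finset.mem_product, Finset.mem_univ, true_and, hj]
    constructor
    · rintro ⟨hc, hb⟩
      refine ⟨fun k => ?_, hc⟩
      have := hb k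
      simpa [hN k] using this
    · rintro ⟨hb, hc⟩
      refine ⟨hc, fun k => ?_⟩
      simpa [hN k] using hb k
  simp only [Finset.filter_congr_decidable] at this ⊢
  rw [this, Finset.card_product, count_constrained j hjinj t]

lemma value_lemma {n : ℕ} (i : Fin n → ℕ) (hi : Function.Injective i)
    (t : Fin n → Bool) (N : ℕ) (hN : ∀ k, i k < N) (σ : Finset (ℕ → Bool))
    (hσ : σ.Nonempty) :
    (∑ ω ∈ lamCT N σ, Set.indicator {ω : ℕ → Bool | ∀ k : Fin n, ω (i k) = t k}
        (fun _ => (1 : ℝ)) ω) / ((lamCT N σ).card : ℝ) = ((2 : ℝ) ^ n)⁻¹ := by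
  classical
  have hnN : n ≤ N := by
    have := Fintype.card_le_of_injective (fun k => (⟨i k, hN k⟩ : Fin N))
      (fun a b h => hi (congrArg Fin.val h))
    simpa using this
  have hsum : (∑ ω ∈ lamCT N σ, Set.indicator
      {ω : ℕ → Bool | ∀ k : Fin n, ω (i k) = t k} (fun _ => (1 : ℝ)) ω)
      = (((lamCT N σ).filter (fun ω => ∀ k, ω (i k) = t k)).card : ℝ) := by
    rw [Finset.card_filter]
    push_cast
    refine Finset.sum_congr rfl fun ω _ => ?_
    simp [Set.indicator_apply, Set.mem_setOf_eq]
  rw [hsum]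
  have h1 := lamCT_filter_card i hi t N hN σ
  rw [h1, lamCT_card]
  have hσ0 : (σ.card : ℝ) ≠ 0 := by
    exact_mod_cast Finset.card_ne_zero_of_mem hσ.choose_spec
  have hpow : (2 : ℝ) ^ (N - n) * 2 ^ n = 2 ^ N := by
    rw [← pow_add, Nat.sub_add_cancel hnN]
  push_cast
  have hpowR : (2 : ℝ) ^ (N - n) * 2 ^ n = 2 ^ N := by
    rw [← pow_add, Nat.sub_add_cancel hnN]
  field_simp
  nlinarith [hpowR, sq_nonneg ((σ.card : ℝ))]

lemma lamCT_nonempty_iff (N : ℕ) (σ : Finset (ℕ → Bool)) (h : (lamCT N σ).Nonempty) :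
    σ.Nonempty := by
  by_contra hσ
  rw [Finset.not_nonempty_iff_eq_empty] at hσ
  subst hσ
  simp [lamCT] at h

/-- In the fair lottery on the coin-toss space `Ω = {H,T}^ℕ` produced
by the family `Λ_CT = {λ_{N,σ}}`, every cylindrical set of codimension `n`, given by
injective indices `i₁,…,iₙ` and values `t₁,…,tₙ`, has probability `2^{−n}`.  Here
`P(A) = J(λ ↦ |A ∩ λ|/|λ|)` and `J` annihilates every function vanishing on all
`λ_{N,σ}` with `N` large enough. -/
theorem coinToss_cylinder_probability
    {R : Type*} [Field R] (ι : ℝ →+* R)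
    (J : (FinP (ℕ → Bool) → ℝ) →+* R)
    (hJconst : ∀ r : ℝ, J (fun _ => r) = ι r)
    (hann : ∀ φ : FinP (ℕ → Bool) → ℝ,
      (∃ N₀ : ℕ, ∀ N : ℕ, N₀ ≤ N → ∀ l : FinP (ℕ → Bool),
        (∃ σ : Finset (ℕ → Bool), l.1 = lamCT N σ) → φ l = 0) → J φ = 0)
    (n : ℕ) (i : Fin n → ℕ) (hi : Function.Injective i) (t : Fin n → Bool) :
    J (fun l : FinP (ℕ → Bool) =>
        (∑ ω ∈ l.1, Set.indicator {ω : ℕ → Bool | ∀ k : Fin n, ω (i k) = t k}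
            (fun _ => (1 : ℝ)) ω) / (l.1.card : ℝ))
      = ι (((2 : ℝ) ^ n)⁻¹) := by
  classical
  set c : ℝ := ((2 : ℝ) ^ n)⁻¹ with hc
  set φ : FinP (ℕ → Bool) → ℝ := fun l =>
    (∑ ω ∈ l.1, Set.indicator {ω : ℕ → Bool | ∀ k : Fin n, ω (i k) = t k}
        (fun _ => (1 : ℝ)) ω) / (l.1.card : ℝ) with hφ
  have h0 : J (fun l => φ l - c) = 0 := by
    refine hann _ ⟨Finset.univ.sup i + 1, fun N hNlb l ⟨σ, hlσ⟩ => ?_⟩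
    have hN : ∀ k, i k < N := fun k =>
      lt_of_le_of_lt (Finset.le_sup (Finset.mem_univ k)) (Nat.lt_of_succ_le hNlb)
    have hσ : σ.Nonempty := lamCT_nonempty_iff N σ (hlσ ▸ l.2)
    have := value_lemma i hi t N hN σ hσ
    simp only [hφ, hlσ, this, hc, sub_self]
  calc J φ = J ((fun l => φ l - c) + fun _ => c) := by
        congr 1; funext l; simp
    _ = J (fun l => φ l - c) + J (fun _ => c) := map_add J _ _
    _ = ι c := by rw [h0, hJconst, zero_add]
end
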